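/- arXiv:2211.04245 — 11 statements merged into one kernel-verified Lean document; each statement's English description precedes it below -/
import Mathlib

section
/- Let Q ⊆ ℝ^n be a convex set, ν ∈ [0,1], M_ν > 0, and let h : ℝ^n → ℝ be differentiable with ‖∇h(x) − ∇h(y)‖ ≤ M_ν‖x − y‖^ν for all x, y ∈ Q. For δ > 0 set M(ν,δ) := δ^{(ν−1)/(ν+1)} · M_ν^{2/(ν+1)}. Then for every M ≥ M(ν,δ) and all x, y ∈ Q: h(x) ≤ h(y) + ⟨∇h(y), x − y⟩ + (M/2)‖x − y‖² + δ/2. -/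
open RealInnerProductSpace

lemma holder_numeric (ν Mν δ M : ℝ) (hν0 : 0 ≤ ν) (hν1 : ν ≤ 1) (hMν : 0 < Mν) (hδ : 0 < δ)
    (hM : δ ^ ((ν - 1) / (ν + 1)) * Mν ^ (2 / (ν + 1)) ≤ M) (t : ℝ) (ht : 0 ≤ t) :
    Mν / (ν + 1) * t ^ (ν + 1) ≤ M / 2 * t ^ 2 + δ / 2 := by
  have hν1' : (0:ℝ) < ν + 1 := by linarith
  set a : ℝ := 2 / (ν + 1) with ha
  have hra : 0 < Mν / δ := div_pos hMν hδ
  set r : ℝ := (Mν / δ) ^ a with hr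
  have hrpos : 0 < r := Real.rpow_pos_of_pos hra a
  -- AM-GM
  have hAM := Real.geom_mean_le_arith_mean2_weighted
    (by linarith : (0:ℝ) ≤ (ν + 1) / 2) (by linarith : (0:ℝ) ≤ (1 - ν) / 2)
    (by positivity : (0:ℝ) ≤ r * t ^ 2) (zero_le_one) (by ring)
  simp only [Real.one_rpow, mul_one] at hAM
  have hsplit : (r * t ^ 2) ^ ((ν + 1) / 2) = (Mν / δ) * t ^ (ν + 1) := by
    rw [Real.mul_rpow hrpos.le (by positivity), hr, ← Real.rpow_natCast t 2,
      ← Real.rpow_mul hra.le, ← Real.rpow_mul ht]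
    norm_num
    rw [show a * ((ν + 1) / 2) = 1 by rw [ha]; field_simp, Real.rpow_one,
      show 2 * ((ν + 1) / 2) = ν + 1 by ring]
  rw [hsplit] at hAM
  -- δ * r ≤ M
  have hδr : δ * r ≤ M := by
    have : δ ^ ((ν - 1) / (ν + 1)) * Mν ^ a = δ * r := by
      rw [hr, Real.div_rpow hMν.le hδ.le,
        show (ν - 1) / (ν + 1) = 1 - a by rw [ha]; field_simp; ring,
        Real.rpow_sub hδ, Real.rpow_one]
      field_simp
    linarith [hM, this ▸ hM]
  -- multiply AM-GM by δ/(ν+1)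
  have hmul : Mν / (ν + 1) * t ^ (ν + 1)
      ≤ δ / (ν + 1) * ((ν + 1) / 2 * (r * t ^ 2) + (1 - ν) / 2) := by
    have h1 : δ / (ν + 1) * (Mν / δ * t ^ (ν + 1)) = Mν / (ν + 1) * t ^ (ν + 1) := by
      field_simp
    calc Mν / (ν + 1) * t ^ (ν + 1) = δ / (ν + 1) * (Mν / δ * t ^ (ν + 1)) := h1.symm
      _ ≤ δ / (ν + 1) * ((ν + 1) / 2 * (r * t ^ 2) + (1 - ν) / 2) := by
          exact mul_le_mul_of_nonneg_left hAM (by positivity)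
  have hexp : δ / (ν + 1) * ((ν + 1) / 2 * (r * t ^ 2) + (1 - ν) / 2)
      = (δ * r) / 2 * t ^ 2 + δ * ((1 - ν) / (ν + 1)) / 2 := by
    field_simp
  rw [hexp] at hmul
  have h2 : δ * ((1 - ν) / (ν + 1)) / 2 ≤ δ / 2 := by
    have : (1 - ν) / (ν + 1) ≤ 1 := by
      rw [div_le_one hν1']; linarith
    nlinarith
  have h3 : (δ * r) / 2 * t ^ 2 ≤ M / 2 * t ^ 2 := by
    apply mul_le_mul_of_nonneg_right _ (by positivity)
    linarith
  linarith

lemma holder_descent {n : ℕ} (Q : Set (EuclideanSpace ℝ (Fin n)))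
    (hQ : Convex ℝ Q) (ν Mν : ℝ) (hν0 : 0 ≤ ν) (hν1 : ν ≤ 1) (hMν : 0 < Mν)
    (h : EuclideanSpace ℝ (Fin n) → ℝ) (hdiff : Differentiable ℝ h)
    (hHolder : ∀ x ∈ Q, ∀ y ∈ Q, ‖gradient h x - gradient h y‖ ≤ Mν * ‖x - y‖ ^ ν) :
    ∀ x ∈ Q, ∀ y ∈ Q,
      h x ≤ h y + ⟪gradient h y, x - y⟫ + Mν / (ν + 1) * ‖x - y‖ ^ (ν + 1) := by
  intro x hx y hy
  have hν1' : (0:ℝ) < ν + 1 := by linarith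
  rcases eq_or_ne x y with rfl | hxy
  · simp
    positivity
  set v : EuclideanSpace ℝ (Fin n) := x - y with hv
  have hvpos : 0 < ‖v‖ := by
    rw [hv, norm_pos_iff, sub_ne_zero]; exact hxy
  have hfd : ∀ z, fderiv ℝ h z v = ⟪gradient h z, v⟫ := by
    intro z
    rw [← InnerProductSpace.toDual_apply_apply, gradient, LinearIsometryEquiv.apply_symm_apply]
  set ip : ℝ := ⟪gradient h y, v⟫ with hip
  set C : ℝ := Mν * ‖v‖ ^ (ν + 1) / (ν + 1) with hC
  set F : ℝ → ℝ := fun t => C * t ^ (ν + 1) + t * ip + h y - h (y + t • v) with hF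
  have hder : ∀ t : ℝ, HasDerivAt F
      (C * ((ν + 1) * t ^ ν) + ip - fderiv ℝ h (y + t • v) v) t := by
    intro t
    have h1 : HasDerivAt (fun s : ℝ => s ^ (ν + 1)) ((ν + 1) * t ^ ν) t := by
      have := Real.hasDerivAt_rpow_const (x := t) (p := ν + 1) (Or.inr (by linarith))
      simpa using this
    have h2 : HasDerivAt (fun s : ℝ => y + s • v) v t := by
      simpa using ((hasDerivAt_id t).smul_const v).const_add y
    have h3 : HasDerivAt (fun s : ℝ => h (y + s • v)) (fderiv ℝ h (y + t • v) v) t :=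
      (hdiff (y + t • v)).hasFDerivAt.comp_hasDerivAt t h2
    have := (((h1.const_mul C).add ((hasDerivAt_id t).mul_const ip)).add_const (h y)).sub h3
    simp at this; exact this
  have hmono : MonotoneOn F (Set.Icc 0 1) := by
    apply monotoneOn_of_deriv_nonneg (convex_Icc 0 1)
    · exact (fun t _ => ((hder t).differentiableAt).continuousAt.continuousWithinAt)
    · exact fun t _ => ((hder t).differentiableAt).differentiableWithinAt
    · intro t htm
      rw [interior_Icc] at htm
      rw [(hder t).deriv]
      have hmem : y + t • v ∈ Q :=
        hQ.add_smul_sub_mem hy hx ⟨htm.1.le, htm.2.le⟩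
      have hbound : fderiv ℝ h (y + t • v) v - ip ≤ Mν * t ^ ν * ‖v‖ ^ (ν + 1) := by
        rw [hfd, hip]
        calc ⟪gradient h (y + t • v), v⟫ - ⟪gradient h y, v⟫
            = ⟪gradient h (y + t • v) - gradient h y, v⟫ := by rw [inner_sub_left]
          _ ≤ ‖gradient h (y + t • v) - gradient h y‖ * ‖v‖ := real_inner_le_norm _ _
          _ ≤ (Mν * ‖y + t • v - y‖ ^ ν) * ‖v‖ := by
              apply mul_le_mul_of_nonneg_right (hHolder _ hmem _ hy) (norm_nonneg _)
          _ = Mν * t ^ ν * ‖v‖ ^ (ν + 1) := by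
              rw [show y + t • v - y = t • v by abel, norm_smul,
                Real.norm_eq_abs, abs_of_pos htm.1,
                Real.mul_rpow htm.1.le (norm_nonneg v),
                Real.rpow_add hvpos, Real.rpow_one]
              ring
      have hCeq : C * ((ν + 1) * t ^ ν) = Mν * t ^ ν * ‖v‖ ^ (ν + 1) := by
        rw [hC]; field_simp
      rw [hCeq]
      linarith
  have hF0 : F 0 = 0 := by
    simp [hF, Real.zero_rpow (ne_of_gt hν1')]
  have hF1 : F 1 = C + ip + h y - h x := by
    simp [hF, hv]
  have := hmono (Set.left_mem_Icc.2 zero_le_one) (Set.right_mem_Icc.2 zero_le_one) zero_le_one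
  rw [hF0, hF1] at this
  have : h x ≤ h y + ip + C := by linarith
  calc h x ≤ h y + ip + C := this
    _ = h y + ⟪gradient h y, x - y⟫ + Mν / (ν + 1) * ‖x - y‖ ^ (ν + 1) := by
        rw [hip, hC, hv]; ring

/-- Hölder gradients can be recast into the Lipschitz setting with inexactness `δ`:
for any `M ≥ M(ν,δ) := δ^((ν-1)/(ν+1)) * Mν^(2/(ν+1))`, the approximate quadratic
upper bound holds. -/
theorem holder_to_inexact_lipschitz {n : ℕ} (Q : Set (EuclideanSpace ℝ (Fin n)))
    (hQ : Convex ℝ Q) (ν Mν : ℝ) (hν0 : 0 ≤ ν) (hν1 : ν ≤ 1) (hMν : 0 < Mν)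
    (h : EuclideanSpace ℝ (Fin n) → ℝ) (hdiff : Differentiable ℝ h)
    (hHolder : ∀ x ∈ Q, ∀ y ∈ Q, ‖gradient h x - gradient h y‖ ≤ Mν * ‖x - y‖ ^ ν)
    (δ M : ℝ) (hδ : 0 < δ)
    (hM : δ ^ ((ν - 1) / (ν + 1)) * Mν ^ (2 / (ν + 1)) ≤ M) :
    ∀ x ∈ Q, ∀ y ∈ Q,
      h x ≤ h y + ⟪gradient h y, x - y⟫ + M / 2 * ‖x - y‖ ^ 2 + δ / 2 := by
  intro x hx y hy
  have h1 := holder_descent Q hQ ν Mν hν0 hν1 hMν h hdiff hHolder x hx y hy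
  have h2 := holder_numeric ν Mν δ M hν0 hν1 hMν hδ hM ‖x - y‖ (norm_nonneg _)
  linarith
end

section
/- Let Q ⊆ ℝ^n be nonempty, closed and convex; let φ : ℝ^n → ℝ be differentiable and 1-strongly convex on Q, i.e. D_φ(x,y) ≥ (1/2)‖x − y‖² for all x, y ∈ Q; let h : ℝ^n → ℝ be differentiable and μ-convex on Q relative to φ with μ ≥ 0, i.e. h(x) ≥ h(y) + ⟨∇h(y), x − y⟩ + μ D_φ(x,y) for all x, y ∈ Q; let g : ℝ^n → ℝ be convex on Q; let A be a real m×n matrix with operator norm ‖A‖ and b ∈ ℝ^m. Let x* ∈ Q with Ax* = b and λ* ∈ ℝ^m satisfy h(x) + g(x) + ⟨λ*, Ax − b⟩ ≥ h(x*) + g(x*) for all x ∈ Q. Let x_k, v_k ∈ Q, λ_k ∈ ℝ^m, and reals α_k > 0, β_k > 0, γ_k > 0, M_{k+1} > 0, δ_{k+1} ≥ 0 be given. Define y_k = (x_k + α_k v_k)/(1+α_k), λ̂_k = λ_k + (α_k/β_k)(A v_k − b), and suppose v_{k+1} ∈ Q and ζ_{k+1} ∈ ℝ^n satisfy: (i)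 g(v) ≥ g(v_{k+1}) + ⟨ζ_{k+1}, v − v_{k+1}⟩ for all v ∈ Q; (ii) γ_k(∇φ(v_{k+1}) − ∇φ(v_k)) = α_k·[ μ(∇φ(y_k) − ∇φ(v_{k+1})) − (∇h(y_k) + ζ_{k+1} + Aᵀλ̂_k) ]. Define x_{k+1} = (x_k + α_k v_{k+1})/(1+α_k), λ_{k+1} = λ_k + (α_k/β_k)(A v_{k+1} − b), γ_{k+1} = (γ_k + μα_k)/(1+α_k), β_{k+1} = β_k/(1+α_k). Assume also the descent estimate h(x_{k+1}) ≤ h(y_k) + ⟨∇h(y_k), x_{k+1} − y_k⟩ + (M_{k+1}/2)‖x_{k+1} − y_k‖² + δ_{k+1}/2 and the step-size relation α_k²(β_k M_{k+1} + ‖A‖²) = γ_k β_k. With E_j := L(x_j, λ*) − L(x*, λ_j) + γ_j D_φ(x*, v_j) + (β_j/2)‖λ_j − λ*‖² for j = k, k+1, one has E_{k+1} − E_k ≤ −α_k E_{k+1} + (δ_{k+1}/2)(1 + α_k). -/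
open RealInnerProductSpace

/-- Bregman divergence associated with a differentiable prox-function `φ`. -/
noncomputable def bregman {n : ℕ} (φ : EuclideanSpace ℝ (Fin n) → ℝ)
    (x y : EuclideanSpace ℝ (Fin n)) : ℝ :=
  φ x - φ y - ⟪gradient φ y, x - y⟫

lemma bregman_three_point {n : ℕ} (φ : EuclideanSpace ℝ (Fin n) → ℝ)
    (x y z : EuclideanSpace ℝ (Fin n)) :
    ⟪gradient φ y - gradient φ z, x - z⟫ = bregman φ x z + bregman φ z y - bregman φ x y := by
  simp [bregman, inner_sub_left, inner_sub_right]; ring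

lemma fq_aux (α β γ M nA x1y2 N2 r1n rr Dvv : ℝ)
    (hα : 0 < α) (hβ : 0 < β)
    (h13 : x1y2 = (α / (1+α)) ^ 2 * N2) (hN : 0 ≤ N2)
    (hq1 : r1n - 2 * rr ≤ nA ^ 2 * N2) (hq2 : 1 / 2 * N2 ≤ Dvv) (hγ : 0 < γ)
    (key2 : M * α ^ 2 / (2 * (1+α)) + α ^ 2 * nA ^ 2 / (2 * β) ≤ γ / 2) :
    (1+α) * (M / 2 * x1y2) + α ^ 2 / (2 * β) * r1n - α ^ 2 / β * rr - γ * Dvv ≤ 0 := by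
  have hP : (0:ℝ) < 1 + α := by linarith
  calc (1+α) * (M / 2 * x1y2) + α ^ 2 / (2 * β) * r1n - α ^ 2 / β * rr - γ * Dvv
      = M * α ^ 2 / (2 * (1+α)) * N2
        + α ^ 2 / (2 * β) * (r1n - 2 * rr) - γ * Dvv := by
        rw [h13]; field_simp; ring
    _ ≤ M * α ^ 2 / (2 * (1+α)) * N2
        + α ^ 2 / (2 * β) * (nA ^ 2 * N2) - γ * (1 / 2 * N2) := by
        have c1 : (0:ℝ) ≤ α ^ 2 / (2 * β) := by positivity
        have b1 := mul_le_mul_of_nonneg_left hq1 c1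
        have b2 := mul_le_mul_of_nonneg_left hq2 (le_of_lt hγ)
        linarith
    _ = (M * α ^ 2 / (2 * (1+α)) + α ^ 2 * nA ^ 2 / (2 * β) - γ / 2) * N2 := by ring
    _ ≤ 0 := mul_nonpos_of_nonpos_of_nonneg (by linarith [key2]) hN

set_option maxHeartbeats 10000000

/-- One-step estimate (Lemma 3.4) for the universal accelerated primal-dual method:
`E_{k+1} - E_k ≤ -α_k E_{k+1} + (δ_{k+1}/2)(1+α_k)`. -/
theorem uapd_one_step_estimate {n m : ℕ}
    (Q : Set (EuclideanSpace ℝ (Fin n))) (hQne : Q.Nonempty)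
    (hQclosed : IsClosed Q) (hQconv : Convex ℝ Q)
    (φ h g : EuclideanSpace ℝ (Fin n) → ℝ)
    (hφdiff : Differentiable ℝ φ) (hhdiff : Differentiable ℝ h)
    (hφsc : ∀ x ∈ Q, ∀ y ∈ Q, bregman φ x y ≥ 1 / 2 * ‖x - y‖ ^ 2)
    (μ : ℝ) (hμ : 0 ≤ μ)
    (hhconv : ∀ x ∈ Q, ∀ y ∈ Q,
      h x ≥ h y + ⟪gradient h y, x - y⟫ + μ * bregman φ x y)
    (hgconv : ConvexOn ℝ Q g)
    (A : EuclideanSpace ℝ (Fin n) →L[ℝ] EuclideanSpace ℝ (Fin m))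
    (b : EuclideanSpace ℝ (Fin m))
    -- saddle point data
    (xs : EuclideanSpace ℝ (Fin n)) (hxsQ : xs ∈ Q) (hxsfeas : A xs = b)
    (ls : EuclideanSpace ℝ (Fin m))
    (hsaddle : ∀ x ∈ Q, h x + g x + ⟪ls, A x - b⟫ ≥ h xs + g xs)
    -- current iterates and parameters
    (xk vk : EuclideanSpace ℝ (Fin n)) (hxkQ : xk ∈ Q) (hvkQ : vk ∈ Q)
    (lk : EuclideanSpace ℝ (Fin m))
    (αk βk γk Mk1 δk1 : ℝ)
    (hαk : 0 < αk) (hβk : 0 < βk) (hγk : 0 < γk) (hMk1 : 0 < Mk1) (hδk1 : 0 ≤ δk1)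
    -- the intermediate points
    (yk : EuclideanSpace ℝ (Fin n))
    (hyk : yk = ((1 + αk)⁻¹ : ℝ) • (xk + αk • vk))
    (lhat : EuclideanSpace ℝ (Fin m))
    (hlhat : lhat = lk + (αk / βk) • (A vk - b))
    -- the primal update `v_{k+1}` with subgradient `ζ_{k+1}`
    (vk1 : EuclideanSpace ℝ (Fin n)) (hvk1Q : vk1 ∈ Q)
    (ζ : EuclideanSpace ℝ (Fin n))
    (hζ : ∀ v ∈ Q, g v ≥ g vk1 + ⟪ζ, v - vk1⟫)
    (hveq : γk • (gradient φ vk1 - gradient φ vk)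
      = αk • (μ • (gradient φ yk - gradient φ vk1)
          - (gradient h yk + ζ + (ContinuousLinearMap.adjoint A) lhat)))
    -- remaining updates
    (xk1 : EuclideanSpace ℝ (Fin n))
    (hxk1 : xk1 = ((1 + αk)⁻¹ : ℝ) • (xk + αk • vk1))
    (lk1 : EuclideanSpace ℝ (Fin m))
    (hlk1 : lk1 = lk + (αk / βk) • (A vk1 - b))
    (γk1 βk1 : ℝ)
    (hγk1 : γk1 = (γk + μ * αk) / (1 + αk))
    (hβk1 : βk1 = βk / (1 + αk))
    -- descent estimate produced by the line search
    (hdescent : h xk1 ≤ h yk + ⟪gradient h yk, xk1 - yk⟫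
      + Mk1 / 2 * ‖xk1 - yk‖ ^ 2 + δk1 / 2)
    -- step-size relation
    (hstep : αk ^ 2 * (βk * Mk1 + ‖A‖ ^ 2) = γk * βk)
    -- Lyapunov function values
    (Ek Ek1 : ℝ)
    (hEk : Ek = (h xk + g xk + ⟪ls, A xk - b⟫) - (h xs + g xs + ⟪lk, A xs - b⟫)
      + γk * bregman φ xs vk + βk / 2 * ‖lk - ls‖ ^ 2)
    (hEk1 : Ek1 = (h xk1 + g xk1 + ⟪ls, A xk1 - b⟫) - (h xs + g xs + ⟪lk1, A xs - b⟫)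
      + γk1 * bregman φ xs vk1 + βk1 / 2 * ‖lk1 - ls‖ ^ 2) :
    Ek1 - Ek ≤ -αk * Ek1 + δk1 / 2 * (1 + αk) := by

  -- basic positivity
  have hP : (0:ℝ) < 1 + αk := by linarith
  have hP0 : (1 + αk : ℝ) ≠ 0 := ne_of_gt hP
  have hβ0 : βk ≠ 0 := ne_of_gt hβk
  have cstep : Mk1 * αk ^ 2 * βk + (1+αk) * αk ^ 2 * ‖A‖ ^ 2 ≤ (1+αk) * γk * βk := by
    nlinarith [mul_pos (mul_pos hαk hαk) (mul_pos hβk hMk1), sq_nonneg ‖A‖]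
  set w := gradient h yk with hw
  set r0 := A vk - b with hr0
  set r1 := A vk1 - b with hr1def
  have key2 : Mk1 * αk ^ 2 / (2 * (1+αk)) + αk ^ 2 * ‖A‖ ^ 2 / (2 * βk) ≤ γk / 2 := by
    rw [div_add_div _ _ (by positivity : (2*(1+αk) : ℝ) ≠ 0) (by positivity : (2*βk : ℝ) ≠ 0),
      div_le_div_iff₀ (by positivity) (by positivity : (0:ℝ) < 2)]
    nlinarith [cstep]
  -- y_k ∈ Q
  have hykQ : yk ∈ Q := by
    have := hQconv hxkQ hvkQ (by positivity : (0:ℝ) ≤ (1+αk)⁻¹)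
      (by positivity : (0:ℝ) ≤ αk * (1+αk)⁻¹) (by field_simp)
    have hyy : (1+αk)⁻¹ • xk + (αk * (1+αk)⁻¹) • vk = yk := by rw [hyk]; module
    rwa [hyy] at this
  -- F1 : descent, multiplied by (1+αk)
  have F1 : (1+αk) * h xk1 ≤ (1+αk) * (h yk + ⟪w, xk1 - yk⟫
      + Mk1 / 2 * ‖xk1 - yk‖ ^ 2 + δk1 / 2) :=
    mul_le_mul_of_nonneg_left hdescent (le_of_lt hP)
  -- F2 : h-convexity at x_k
  have F2 : h yk + ⟪w, xk - yk⟫ ≤ h xk := by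
    have h1 := hhconv xk hxkQ yk hykQ
    have h2 := hφsc xk hxkQ yk hykQ
    nlinarith [mul_nonneg hμ (le_trans (by positivity) h2)]
  -- F3 : h-convexity at x*, multiplied by αk
  have F3 : αk * (h yk + ⟪w, xs - yk⟫ + μ * bregman φ xs yk) ≤ αk * h xs :=
    mul_le_mul_of_nonneg_left (hhconv xs hxsQ yk hykQ) (le_of_lt hαk)
  -- F4 : g-convexity
  have F4 : (1+αk) * g xk1 ≤ g xk + αk * g vk1 := by
    have hc := hgconv.2 hxkQ hvk1Q (by positivity : (0:ℝ) ≤ (1+αk)⁻¹)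
      (by positivity : (0:ℝ) ≤ αk * (1+αk)⁻¹) (by field_simp)
    have hxx : (1+αk)⁻¹ • xk + (αk * (1+αk)⁻¹) • vk1 = xk1 := by rw [hxk1]; module
    rw [hxx] at hc
    have := mul_le_mul_of_nonneg_left hc (le_of_lt hP)
    calc (1+αk) * g xk1 ≤ (1+αk) * ((1+αk)⁻¹ * g xk + αk * (1+αk)⁻¹ * g vk1) := this
      _ = g xk + αk * g vk1 := by field_simp
  -- F5 : subgradient inequality at x*
  have F5 : αk * (g vk1 + ⟪ζ, xs - vk1⟫) ≤ αk * g xs :=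
    mul_le_mul_of_nonneg_left (hζ xs hxsQ) (le_of_lt hαk)
  -- F6 : linearity of the multiplier term
  have hAx1 : (1+αk) • (A xk1 - b) = (A xk - b) + αk • r1 := by
    rw [hxk1, hr1def, map_smul, map_add, map_smul]
    match_scalars <;> field_simp <;> ring
  have F6 : (1+αk) * ⟪ls, A xk1 - b⟫ = ⟪ls, A xk - b⟫ + αk * ⟪ls, r1⟫ := by
    rw [show (1+αk) * ⟪ls, A xk1 - b⟫ = ⟪ls, (1+αk) • (A xk1 - b)⟫ from
      (real_inner_smul_right ls _ _).symm, hAx1, inner_add_right, real_inner_smul_right]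
  -- F7 : optimality condition paired with xs - vk1
  have F7 : αk * ⟪w, xs - vk1⟫ + αk * ⟪ζ, xs - vk1⟫
      = αk * μ * (bregman φ xs vk1 + bregman φ vk1 yk - bregman φ xs yk)
        + γk * (bregman φ xs vk1 + bregman φ vk1 vk - bregman φ xs vk)
        + αk * ⟪lhat, r1⟫ := by
    have hv : ⟪γk • (gradient φ vk1 - gradient φ vk), xs - vk1⟫
        = ⟪αk • (μ • (gradient φ yk - gradient φ vk1)
            - (w + ζ + (ContinuousLinearMap.adjoint A) lhat)), xs - vk1⟫ := by rw [hveq]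
    simp only [real_inner_smul_left, inner_sub_left, inner_add_left] at hv
    have t1 : ⟪gradient φ vk - gradient φ vk1, xs - vk1⟫
        = bregman φ xs vk1 + bregman φ vk1 vk - bregman φ xs vk := bregman_three_point φ xs vk vk1
    have t2 : ⟪gradient φ yk - gradient φ vk1, xs - vk1⟫
        = bregman φ xs vk1 + bregman φ vk1 yk - bregman φ xs yk := bregman_three_point φ xs yk vk1
    simp only [inner_sub_left] at t1 t2
    have tA : ⟪(ContinuousLinearMap.adjoint A) lhat, xs - vk1⟫ = -⟪lhat, r1⟫ := by
      rw [ContinuousLinearMap.adjoint_inner_left]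
      rw [map_sub, hxsfeas, hr1def]
      rw [show b - A vk1 = -(A vk1 - b) by abel, inner_neg_right]
    rw [tA] at hv
    have t1' := congrArg (fun r => γk * r) t1
    have t2' := congrArg (fun r => αk * μ * r) t2
    linarith [hv, t1', t2']
  -- lhat inner product expansion
  have Flhat : ⟪lhat, r1⟫ = ⟪lk, r1⟫ + (αk / βk) * ⟪r0, r1⟫ := by
    rw [hlhat]; rw [inner_add_left, real_inner_smul_left]
  -- F8 : dual update identity
  have F8 : βk / 2 * ‖lk1 - ls‖ ^ 2 = βk / 2 * ‖lk - ls‖ ^ 2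
      + αk * ⟪lk - ls, r1⟫ + αk ^ 2 / (2 * βk) * ‖r1‖ ^ 2 := by
    have e : lk1 - ls = (lk - ls) + (αk / βk) • r1 := by rw [hlk1]; module
    rw [e, norm_add_sq_real, real_inner_smul_right, norm_smul, Real.norm_eq_abs,
      abs_of_pos (by positivity : (0:ℝ) < αk / βk)]
    field_simp
  have F9 : ⟪lk - ls, r1⟫ = ⟪lk, r1⟫ - ⟪ls, r1⟫ := by rw [inner_sub_left]
  -- quadratic bound Fq
  have hvec : xk1 - yk = (αk * (1+αk)⁻¹) • (vk1 - vk) := by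
    rw [hxk1, hyk]; match_scalars <;> field_simp <;> ring
  have F13 : ‖xk1 - yk‖ ^ 2 = (αk / (1+αk)) ^ 2 * ‖vk1 - vk‖ ^ 2 := by
    rw [hvec, norm_smul, mul_pow, Real.norm_eq_abs, sq_abs, div_eq_mul_inv]
  have hq1 : ‖r1‖ ^ 2 - 2 * ⟪r0, r1⟫ ≤ ‖A‖ ^ 2 * ‖vk1 - vk‖ ^ 2 := by
    have hd : r1 - r0 = A (vk1 - vk) := by rw [hr1def, hr0, map_sub]; abel
    have h1 : ‖r1 - r0‖ ≤ ‖A‖ * ‖vk1 - vk‖ := by rw [hd]; exact A.le_opNorm _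
    have h2 : ‖r1 - r0‖ ^ 2 ≤ (‖A‖ * ‖vk1 - vk‖) ^ 2 :=
      pow_le_pow_left₀ (norm_nonneg _) h1 2
    have h3 : ‖r1 - r0‖ ^ 2 = ‖r1‖ ^ 2 - 2 * ⟪r1, r0⟫ + ‖r0‖ ^ 2 := norm_sub_sq_real r1 r0
    have h4 : ⟪r1, r0⟫ = ⟪r0, r1⟫ := real_inner_comm _ _
    nlinarith [sq_nonneg ‖r0‖]
  have hq2 : 1 / 2 * ‖vk1 - vk‖ ^ 2 ≤ bregman φ vk1 vk := hφsc vk1 hvk1Q vk hvkQ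
  have Fq : (1+αk) * (Mk1 / 2 * ‖xk1 - yk‖ ^ 2) + αk ^ 2 / (2 * βk) * ‖r1‖ ^ 2
      - αk ^ 2 / βk * ⟪r0, r1⟫ - γk * bregman φ vk1 vk ≤ 0 :=
    fq_aux αk βk γk Mk1 ‖A‖ _ _ _ _ _ hαk hβk F13 (sq_nonneg _) hq1 hq2 hγk key2
  -- F14 : inner product rearrangement
  have hvec2 : (1+αk) • (xk1 - yk) = (xk - yk) + αk • (xs - yk) + αk • (vk1 - xs) := by
    rw [hxk1, hyk]; match_scalars <;> field_simp <;> ring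
  have F14 : (1+αk) * ⟪w, xk1 - yk⟫
      = ⟪w, xk - yk⟫ + αk * ⟪w, xs - yk⟫ + αk * ⟪w, vk1 - xs⟫ := by
    rw [show (1+αk) * ⟪w, xk1 - yk⟫ = ⟪w, (1+αk) • (xk1 - yk)⟫ from
      (real_inner_smul_right w _ _).symm, hvec2, inner_add_right, inner_add_right,
      real_inner_smul_right, real_inner_smul_right]
  have Fsign : ⟪w, vk1 - xs⟫ = -⟪w, xs - vk1⟫ := by
    rw [← neg_sub, inner_neg_right]
  -- nonnegativity of some Bregman terms
  have Fd : (0:ℝ) ≤ αk * μ * bregman φ vk1 yk := by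
    have := hφsc vk1 hvk1Q yk hykQ
    have h0 : (0:ℝ) ≤ bregman φ vk1 yk := le_trans (by positivity) this
    positivity
  obtain ⟨q, hqdef⟩ : ∃ q : ℝ, q = αk ^ 2 / βk := ⟨_, rfl⟩
  have Flhat'' : αk * ⟪lhat, r1⟫ = αk * ⟪lk, r1⟫ + q * ⟪r0, r1⟫ := by
    rw [hqdef, Flhat]; ring
  have F8'' : βk / 2 * ‖lk1 - ls‖ ^ 2 = βk / 2 * ‖lk - ls‖ ^ 2
      + αk * ⟪lk - ls, r1⟫ + q / 2 * ‖r1‖ ^ 2 := by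
    rw [hqdef, F8]; ring
  have Fq'' : (1+αk) * (Mk1 / 2 * ‖xk1 - yk‖ ^ 2) + q / 2 * ‖r1‖ ^ 2
      - q * ⟪r0, r1⟫ - γk * bregman φ vk1 vk ≤ 0 := by
    rw [hqdef]
    refine le_trans (le_of_eq ?_) Fq
    ring
  -- KEY inequality
  have KEY : (1+αk) * (h xk1 + g xk1 + ⟪ls, A xk1 - b⟫)
      + (γk + μ * αk) * bregman φ xs vk1 + βk / 2 * ‖lk1 - ls‖ ^ 2
      ≤ (h xk + g xk + ⟪ls, A xk - b⟫) + αk * (h xs + g xs)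
        + γk * bregman φ xs vk + βk / 2 * ‖lk - ls‖ ^ 2 + (1+αk) * (δk1 / 2) := by
    have F9' : αk * ⟪lk - ls, r1⟫ = αk * (⟪lk, r1⟫ - ⟪ls, r1⟫) := by rw [F9]
    have Fsign' : αk * ⟪w, vk1 - xs⟫ = -(αk * ⟪w, xs - vk1⟫) := by rw [Fsign]; ring
    linarith [F1, F2, F3, F4, F5, F6, F7, Flhat'', F8'', F9', Fq'', F14, Fsign', Fd]
  -- assemble
  have hz : A xs - b = 0 := by rw [hxsfeas]; simp
  have z0 : ⟪lk, A xs - b⟫ = (0:ℝ) := by rw [hz]; exact inner_zero_right _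
  have z1 : ⟪lk1, A xs - b⟫ = (0:ℝ) := by rw [hz]; exact inner_zero_right _
  have hE1 : (1+αk) * Ek1 = (1+αk) * ((h xk1 + g xk1 + ⟪ls, A xk1 - b⟫) - (h xs + g xs))
      + (γk + μ * αk) * bregman φ xs vk1 + βk / 2 * ‖lk1 - ls‖ ^ 2 := by
    rw [hEk1, z1, hγk1, hβk1]
    field_simp
    ring
  have hEk' : Ek = (h xk + g xk + ⟪ls, A xk - b⟫) - (h xs + g xs)
      + γk * bregman φ xs vk + βk / 2 * ‖lk - ls‖ ^ 2 := by rw [hEk, z0]; ring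
  linarith [KEY, hE1, hEk']
end

section
/- Let θ > 1, R > 0, η = θ − 1. Let σ : [0,∞) → ℝ be nonnegative and locally integrable, and set Σ(t) := ∫₀^t σ(s) ds. Let φ : [0,∞) → ℝ be positive, nondecreasing and continuously differentiable. Let y : [0,∞) → ℝ be differentiable with y(t) > 0 for all t ≥ 0, y(0) = 1, and y'(t) ≤ −σ(t)·y(t)^θ / √(φ(t)·y(t)^{2η} + R²) for all t ≥ 0. Then for all t > 0: y(t) ≤ exp(−Σ(t)/(2√(φ(t)))) + (1 + (θ−1)Σ(t)/(2R))^{−1/(θ−1)}. -/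
open MeasureTheory

private lemma sqrt_add_le' (a b : ℝ) (ha : 0 ≤ a) (hb : 0 ≤ b) :
    Real.sqrt (a + b) ≤ Real.sqrt a + Real.sqrt b := by
  have h1 : a + b ≤ (Real.sqrt a + Real.sqrt b) ^ 2 := by
    have := Real.sq_sqrt ha
    have := Real.sq_sqrt hb
    have := Real.sqrt_nonneg a
    have := Real.sqrt_nonneg b
    nlinarith
  calc Real.sqrt (a + b) ≤ Real.sqrt ((Real.sqrt a + Real.sqrt b) ^ 2) :=
        Real.sqrt_le_sqrt h1
    _ = Real.sqrt a + Real.sqrt b :=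
        Real.sqrt_sq (by positivity)

/-- Decay estimate for the differential inequality
`y' ≤ -σ y^θ / √(φ y^{2η} + R²)` in the critical case `η = θ - 1`. -/
theorem decay_estimate_critical (θ R : ℝ) (hθ : 1 < θ) (hR : 0 < R)
    (σ : ℝ → ℝ) (hσnonneg : ∀ t ≥ (0 : ℝ), 0 ≤ σ t)
    (hσint : ∀ t : ℝ, IntervalIntegrable σ volume 0 t)
    (φ : ℝ → ℝ) (hφpos : ∀ t ≥ (0 : ℝ), 0 < φ t)
    (hφmono : MonotoneOn φ (Set.Ici 0))
    (hφC1 : ContDiffOn ℝ 1 φ (Set.Ici 0))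
    (y y' : ℝ → ℝ)
    (hyderiv : ∀ t ≥ (0 : ℝ), HasDerivWithinAt y (y' t) (Set.Ici 0) t)
    (hypos : ∀ t ≥ (0 : ℝ), 0 < y t) (hy0 : y 0 = 1)
    (hyineq : ∀ t ≥ (0 : ℝ), y' t ≤
      -(σ t * y t ^ θ) / Real.sqrt (φ t * y t ^ (2 * (θ - 1)) + R ^ 2)) :
    ∀ t > (0 : ℝ),
      y t ≤ Real.exp (-(∫ s in (0 : ℝ)..t, σ s) / (2 * Real.sqrt (φ t)))
        + (1 + (θ - 1) * (∫ s in (0 : ℝ)..t, σ s) / (2 * R)) ^ (-(1 / (θ - 1))) := by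
  intro t ht
  set η : ℝ := θ - 1 with hη
  have hηpos : 0 < η := by simp [hη]; linarith
  have hΦpos : 0 < φ t := hφpos t ht.le
  set sΦ : ℝ := Real.sqrt (φ t) with hsΦ
  have hsΦpos : 0 < sΦ := Real.sqrt_pos.mpr hΦpos
  set S : ℝ := ∫ s in (0 : ℝ)..t, σ s with hS
  have hSnonneg : 0 ≤ S := by
    apply intervalIntegral.integral_nonneg ht.le
    intro u hu; exact hσnonneg u hu.1
  -- the Lyapunov function
  set G : ℝ → ℝ := fun s => -sΦ * Real.log (y s) + (R / η) * (y s ^ (-η) - 1) with hG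
  set g' : ℝ → ℝ := fun s => -sΦ * (y' s / y s) + (R / η) * (y' s * (-η) * y s ^ (-η - 1))
    with hg'
  -- continuity of G on [0, t]
  have hycont : ContinuousOn y (Set.Icc 0 t) := by
    intro s hs
    exact ((hyderiv s hs.1).continuousWithinAt).mono (fun u hu => hu.1)
  have hGcont : ContinuousOn G (Set.Icc 0 t) := by
    apply ContinuousOn.add
    · exact continuousOn_const.mul (hycont.log (fun s hs => (hypos s hs.1).ne'))
    · exact continuousOn_const.mul
        ((hycont.rpow_const (fun s hs => Or.inl (hypos s hs.1).ne')).sub continuousOn_const)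
  -- derivative of G
  have hGderiv : ∀ x ∈ Set.Ioo (0 : ℝ) t, HasDerivWithinAt G (g' x) (Set.Ioi x) x := by
    intro x hx
    have hx0 : (0 : ℝ) ≤ x := hx.1.le
    have hyd : HasDerivWithinAt y (y' x) (Set.Ioi x) x :=
      (hyderiv x hx0).mono (fun u hu => le_trans hx0 (le_of_lt hu))
    have hyx : y x ≠ 0 := (hypos x hx0).ne'
    have h1 : HasDerivWithinAt (fun s => -sΦ * Real.log (y s)) (-sΦ * (y' x / y x))
        (Set.Ioi x) x := (hyd.log hyx).const_mul _
    have h2 : HasDerivWithinAt (fun s => (R / η) * (y s ^ (-η) - 1))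
        ((R / η) * (y' x * (-η) * y x ^ (-η - 1))) (Set.Ioi x) x :=
      ((hyd.rpow_const (Or.inl hyx)).sub_const 1).const_mul _
    exact h1.add h2
  -- g' dominates σ on (0, t)
  have hkey : ∀ x ∈ Set.Ioo (0 : ℝ) t, σ x ≤ g' x := by
    intro x hx
    have hx0 : (0 : ℝ) ≤ x := hx.1.le
    have hu : 0 < y x := hypos x hx0
    have hσx : 0 ≤ σ x := hσnonneg x hx0
    have hφx : 0 < φ x := hφpos x hx0
    have hφxt : φ x ≤ φ t := hφmono hx0 ht.le hx.2.le
    set u : ℝ := y x with hudef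
    have hu2η : (0 : ℝ) < u ^ (2 * η) := Real.rpow_pos_of_pos hu _
    have hD : 0 < Real.sqrt (φ x * u ^ (2 * η) + R ^ 2) := by
      apply Real.sqrt_pos.mpr; positivity
    have hineq := hyineq x hx0
    -- -y' x ≥ σ x * u ^ θ / √(...)
    have hy'le : σ x * u ^ θ / Real.sqrt (φ x * u ^ (2 * η) + R ^ 2) ≤ -y' x := by
      have := hineq
      rw [neg_div] at this
      linarith
    -- denominator estimate: √(φ x u^{2η} + R²) ≤ sΦ * u^η + R
    have hsqrtuη : Real.sqrt (u ^ (2 * η)) = u ^ η := by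
      rw [show (2 : ℝ) * η = η * 2 by ring, Real.rpow_mul hu.le,
        show ((u ^ η : ℝ) ^ (2:ℝ)) = (u ^ η) ^ (2:ℕ) by
          rw [← Real.rpow_natCast (u ^ η) 2]; norm_num]
      exact Real.sqrt_sq (Real.rpow_pos_of_pos hu η).le
    have hden : Real.sqrt (φ x * u ^ (2 * η) + R ^ 2) ≤ sΦ * u ^ η + R := by
      calc Real.sqrt (φ x * u ^ (2 * η) + R ^ 2)
          ≤ Real.sqrt (φ t * u ^ (2 * η) + R ^ 2) := by
            apply Real.sqrt_le_sqrt; nlinarith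
        _ ≤ Real.sqrt (φ t * u ^ (2 * η)) + Real.sqrt (R ^ 2) :=
            sqrt_add_le' _ _ (by positivity) (by positivity)
        _ = sΦ * u ^ η + R := by
            rw [Real.sqrt_mul hΦpos.le, hsqrtuη, Real.sqrt_sq hR.le]
    -- g' x = (-y' x) * (sΦ / u + R * u^{-η-1})
    have hK : 0 < sΦ / u + R * u ^ (-η - 1) := by
      have := Real.rpow_pos_of_pos hu (-η - 1); positivity
    have hgform : g' x = (-y' x) * (sΦ / u + R * u ^ (-η - 1)) := by
      simp only [hg', ← hudef]
      field_simp
      ring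
    -- u^θ * (sΦ / u + R * u^{-η-1}) = sΦ * u^η + R
    have hpow : u ^ θ * (sΦ / u + R * u ^ (-η - 1)) = sΦ * u ^ η + R := by
      have e1 : u ^ θ / u = u ^ η := by
        rw [show θ = η + 1 by rw [hη]; ring, Real.rpow_add hu, Real.rpow_one,
          mul_div_assoc, div_self hu.ne', mul_one]
      have e2 : u ^ θ * u ^ (-η - 1) = 1 := by
        rw [← Real.rpow_add hu, show θ + (-η - 1) = 0 by rw [hη]; ring, Real.rpow_zero]
      calc u ^ θ * (sΦ / u + R * u ^ (-η - 1))
          = sΦ * (u ^ θ / u) + R * (u ^ θ * u ^ (-η - 1)) := by ring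
        _ = sΦ * u ^ η + R := by rw [e1, e2, mul_one]
    rw [hgform]
    calc σ x = σ x * Real.sqrt (φ x * u ^ (2 * η) + R ^ 2) /
          Real.sqrt (φ x * u ^ (2 * η) + R ^ 2) := by field_simp
      _ ≤ σ x * (sΦ * u ^ η + R) / Real.sqrt (φ x * u ^ (2 * η) + R ^ 2) := by
          exact div_le_div_of_nonneg_right (mul_le_mul_of_nonneg_left hden hσx) hD.le
      _ = σ x * u ^ θ / Real.sqrt (φ x * u ^ (2 * η) + R ^ 2) *
            (sΦ / u + R * u ^ (-η - 1)) := by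
          rw [div_mul_eq_mul_div, mul_assoc, hpow]
      _ ≤ (-y' x) * (sΦ / u + R * u ^ (-η - 1)) :=
          mul_le_mul_of_nonneg_right hy'le hK.le
  -- integrate
  have hσInt : IntegrableOn σ (Set.Icc 0 t) volume := by
    rw [integrableOn_Icc_iff_integrableOn_Ioc]
    exact (hσint t).1
  have hFTC : S ≤ G t - G 0 :=
    intervalIntegral.integral_le_sub_of_hasDeriv_right_of_le ht.le hGcont hGderiv hσInt hkey
  have hG0 : G 0 = 0 := by
    simp [hG, hy0, Real.log_one, Real.one_rpow]
  rw [hG0, sub_zero] at hFTC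
  simp only [hG] at hFTC
  -- hFTC : S ≤ -sΦ * log (y t) + (R/η) * ((y t)^(-η) - 1)
  set u : ℝ := y t with hudef
  have hu : 0 < u := hypos t ht.le
  -- positivity of both terms in the target
  have hBbase : (0 : ℝ) < 1 + η * S / (2 * R) := by positivity
  have hBpos : (0 : ℝ) < (1 + η * S / (2 * R)) ^ (-(1 / η)) :=
    Real.rpow_pos_of_pos hBbase _
  have hApos : (0 : ℝ) < Real.exp (-S / (2 * sΦ)) := Real.exp_pos _
  have hgoal : y t ≤ Real.exp (-S / (2 * sΦ)) + (1 + η * S / (2 * R)) ^ (-(1 / η)) := by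
    rcases le_or_gt (S / 2) (-sΦ * Real.log u) with hc | hc
    · -- exponential case
      have hlog : Real.log u ≤ -S / (2 * sΦ) := by
        rw [le_div_iff₀ (by positivity : (0:ℝ) < 2 * sΦ)]
        nlinarith
      have : u ≤ Real.exp (-S / (2 * sΦ)) := by
        calc u = Real.exp (Real.log u) := (Real.exp_log hu).symm
          _ ≤ Real.exp (-S / (2 * sΦ)) := Real.exp_le_exp.mpr hlog
      linarith
    · -- algebraic case
      have hc2 : S / 2 ≤ (R / η) * (u ^ (-η) - 1) := by linarith
      have hpow : 1 + η * S / (2 * R) ≤ u ^ (-η) := by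
        have h2 : η / R * (S / 2) ≤ η / R * (R / η * (u ^ (-η) - 1)) :=
          mul_le_mul_of_nonneg_left hc2 (by positivity)
        have e : η / R * (R / η * (u ^ (-η) - 1)) = u ^ (-η) - 1 := by
          field_simp
        have e2 : η / R * (S / 2) = η * S / (2 * R) := by ring
        rw [e, e2] at h2
        linarith
      have hult : u ≤ (1 + η * S / (2 * R)) ^ (-(1 / η)) := by
        have h1 : (u ^ (-η)) ^ (-(1 / η)) ≤ (1 + η * S / (2 * R)) ^ (-(1 / η)) :=
          Real.rpow_le_rpow_of_nonpos hBbase hpow (neg_nonpos.mpr (by positivity))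
        have h2 : (u ^ (-η)) ^ (-(1 / η)) = u := by
          rw [← Real.rpow_mul hu.le, show (-η) * (-(1 / η)) = 1 by field_simp, Real.rpow_one]
        rw [h2] at h1; exact h1
      linarith
  exact hgoal
end

section
/- Let θ > 1, R > 0, and 0 ≤ η < θ − 1. Let σ : [0,∞) → ℝ be nonnegative and locally integrable, and set Σ(t) := ∫₀^t σ(s) ds. Let φ : [0,∞) → ℝ be positive, nondecreasing and continuously differentiable. Let y : [0,∞) → ℝ be differentiable with y(t) > 0 for all t ≥ 0, y(0) = 1, and y'(t) ≤ −σ(t)·y(t)^θ / √(φ(t)·y(t)^{2η} + R²) for all t ≥ 0. Then for all t > 0: y(t) ≤ (1 + (θ−1)Σ(t)/(2R))^{−1/(θ−1)} + (1 + (θ−η−1)Σ(t)/(2√(φ(t))))^{−1/(θ−η−1)}. -/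
open MeasureTheory

/-- Decay estimate for the differential inequality
`y' ≤ -σ y^θ / √(φ y^{2η} + R²)` in the subcritical case `0 ≤ η < θ - 1`. -/
theorem decay_estimate_subcritical (θ R η : ℝ) (hθ : 1 < θ) (hR : 0 < R)
    (hη0 : 0 ≤ η) (hη : η < θ - 1)
    (σ : ℝ → ℝ) (hσnonneg : ∀ t ≥ (0 : ℝ), 0 ≤ σ t)
    (hσint : ∀ t : ℝ, IntervalIntegrable σ volume 0 t)
    (φ : ℝ → ℝ) (hφpos : ∀ t ≥ (0 : ℝ), 0 < φ t)
    (hφmono : MonotoneOn φ (Set.Ici 0))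
    (hφC1 : ContDiffOn ℝ 1 φ (Set.Ici 0))
    (y y' : ℝ → ℝ)
    (hyderiv : ∀ t ≥ (0 : ℝ), HasDerivWithinAt y (y' t) (Set.Ici 0) t)
    (hypos : ∀ t ≥ (0 : ℝ), 0 < y t) (hy0 : y 0 = 1)
    (hyineq : ∀ t ≥ (0 : ℝ), y' t ≤
      -(σ t * y t ^ θ) / Real.sqrt (φ t * y t ^ (2 * η) + R ^ 2)) :
    ∀ t > (0 : ℝ),
      y t ≤ (1 + (θ - 1) * (∫ s in (0 : ℝ)..t, σ s) / (2 * R)) ^ (-(1 / (θ - 1)))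
        + (1 + (θ - η - 1) * (∫ s in (0 : ℝ)..t, σ s) / (2 * Real.sqrt (φ t)))
            ^ (-(1 / (θ - η - 1))) := by
  intro t ht
  have h0t : (0 : ℝ) ≤ t := ht.le
  set Sg : ℝ := ∫ s in (0 : ℝ)..t, σ s with hSgdef
  have hSg0 : 0 ≤ Sg :=
    intervalIntegral.integral_nonneg h0t (fun u hu => hσnonneg u hu.1)
  set P : ℝ := Real.sqrt (φ t) with hPdef
  have hP : 0 < P := Real.sqrt_pos.2 (hφpos t h0t)
  set q1 : ℝ := θ - 1 with hq1def
  set q2 : ℝ := θ - η - 1 with hq2def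
  have hq1 : 0 < q1 := by simp only [hq1def]; linarith
  have hq2 : 0 < q2 := by simp only [hq2def]; linarith
  set Φ : ℝ → ℝ := fun v => P * (v ^ (-q2) - 1) / q2 + R * (v ^ (-q1) - 1) / q1 with hΦdef
  -- derivative of Φ
  have hΦderiv : ∀ v : ℝ, 0 < v →
      HasDerivAt Φ (-((P * v ^ η + R) * v ^ (-θ))) v := by
    intro v hv
    have h1 : HasDerivAt (fun x : ℝ => x ^ (-q2)) (-q2 * v ^ (-q2 - 1)) v :=
      Real.hasDerivAt_rpow_const (Or.inl hv.ne')
    have h2 : HasDerivAt (fun x : ℝ => x ^ (-q1)) (-q1 * v ^ (-q1 - 1)) v :=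
      Real.hasDerivAt_rpow_const (Or.inl hv.ne')
    have h3 := (((h1.sub_const 1).const_mul P).div_const q2).add
      (((h2.sub_const 1).const_mul R).div_const q1)
    convert h3 using 1
    · rfl
    · rfl
    · rfl
    have e1 : v ^ (-q2 - 1) = v ^ η * v ^ (-θ) := by
      rw [← Real.rpow_add hv, show η + -θ = -q2 - 1 by rw [hq2def]; ring]
    have e2 : v ^ (-q1 - 1) = v ^ (-θ) := by
      rw [show -q1 - 1 = -θ by rw [hq1def]; ring]
    rw [e1, e2]
    field_simp
    ring
  -- y is continuous on [0, ∞)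
  have hycont : ContinuousOn y (Set.Ici 0) := fun s hs =>
    (hyderiv s hs).continuousWithinAt
  have hIccIci : Set.Icc (0:ℝ) t ⊆ Set.Ici 0 := fun s hs => hs.1
  -- pointwise derivative bound : y' x ≤ -(σ x * y x ^ θ) / (P * y x ^ η + R)
  have hptwise : ∀ x ∈ Set.Icc (0:ℝ) t,
      y' x ≤ -(σ x * y x ^ θ) / (P * y x ^ η + R) := by
    intro x hx
    have hx0 : (0:ℝ) ≤ x := hx.1
    have hyx : 0 < y x := hypos x hx0
    have hA : 0 < y x ^ η := Real.rpow_pos_of_pos hyx η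
    set A : ℝ := y x ^ η with hAdef
    have hA2 : y x ^ (2 * η) = A ^ 2 := by
      rw [show 2 * η = η + η by ring, Real.rpow_add hyx, hAdef, sq]
    have hφx : φ x ≤ φ t := hφmono hx0 h0t hx.2
    have hφxpos : 0 < φ x := hφpos x hx0
    have hD : 0 < P * A + R := by positivity
    have hSle : Real.sqrt (φ x * y x ^ (2 * η) + R ^ 2) ≤ P * A + R := by
      have hP2 : P ^ 2 = φ t := Real.sq_sqrt (hφpos t h0t).le
      have harg : φ x * y x ^ (2 * η) + R ^ 2 ≤ (P * A + R) ^ 2 := by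
        rw [hA2]
        nlinarith [mul_pos (mul_pos hP hA) hR, sq_nonneg A]
      calc Real.sqrt (φ x * y x ^ (2 * η) + R ^ 2)
          ≤ Real.sqrt ((P * A + R) ^ 2) := Real.sqrt_le_sqrt harg
        _ = P * A + R := Real.sqrt_sq hD.le
    have hSpos : 0 < Real.sqrt (φ x * y x ^ (2 * η) + R ^ 2) := by
      apply Real.sqrt_pos.2
      have : 0 < φ x * y x ^ (2 * η) := by positivity
      positivity
    have hnum : 0 ≤ σ x * y x ^ θ := by
      have := hσnonneg x hx0
      positivity
    have h2 : -(σ x * y x ^ θ) / Real.sqrt (φ x * y x ^ (2 * η) + R ^ 2)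
        ≤ -(σ x * y x ^ θ) / (P * A + R) := by
      rw [neg_div, neg_div, neg_le_neg_iff]
      exact div_le_div_of_nonneg_left hnum hSpos hSle
    exact (hyineq x hx0).trans h2
  -- y t ≤ 1
  have hyle1 : y t ≤ 1 := by
    have hz : IntegrableOn (fun _ : ℝ => (0 : ℝ)) (Set.Icc 0 t) volume := integrableOn_zero
    have hder0 : ∀ x ∈ Set.Ioo (0:ℝ) t, y' x ≤ (fun _ : ℝ => (0:ℝ)) x := by
      intro x hx
      have h1 := hptwise x ⟨hx.1.le, hx.2.le⟩
      have hyx : 0 < y x := hypos x hx.1.le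
      have hA : 0 < y x ^ η := Real.rpow_pos_of_pos hyx η
      have hD : 0 < P * y x ^ η + R := by positivity
      have hnum : 0 ≤ σ x * y x ^ θ := by
        have := hσnonneg x hx.1.le
        positivity
      calc y' x ≤ -(σ x * y x ^ θ) / (P * y x ^ η + R) := h1
        _ ≤ 0 := div_nonpos_iff.2 (Or.inr ⟨by linarith, hD.le⟩)
    have := intervalIntegral.sub_le_integral_of_hasDeriv_right_of_le h0t
      (hycont.mono hIccIci)
      (fun x hx => (hyderiv x hx.1.le).mono fun z hzz => le_of_lt (hx.1.trans hzz))
      hz hder0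
    simpa [hy0] using this
  -- key integral inequality: Sg ≤ Φ (y t)
  have hkey : Sg ≤ Φ (y t) := by
    have hΦcont : ContinuousOn (fun s => Φ (y s)) (Set.Icc 0 t) := by
      intro s hs
      exact (hΦderiv (y s) (hypos s hs.1)).continuousAt.comp_continuousWithinAt
        ((hycont.mono hIccIci) s hs)
    have hσICC : IntegrableOn σ (Set.Icc 0 t) volume :=
      (intervalIntegrable_iff_integrableOn_Icc_of_le h0t).mp (hσint t)
    have hmain := intervalIntegral.integral_le_sub_of_hasDeriv_right_of_le h0t hΦcont
      (g' := fun x => -((P * y x ^ η + R) * y x ^ (-θ)) * y' x)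
      (fun x hx => by
        have hywithin : HasDerivWithinAt y (y' x) (Set.Ioi x) x :=
          (hyderiv x hx.1.le).mono fun z hz => le_of_lt (hx.1.trans hz)
        exact (hΦderiv (y x) (hypos x hx.1.le)).comp_hasDerivWithinAt x hywithin)
      hσICC ?_
    · have hΦ1 : Φ (y 0) = 0 := by simp [hΦdef, hy0]
      rw [hΦ1, sub_zero] at hmain
      exact hmain
    · intro x hx
      have hx0 : (0:ℝ) ≤ x := hx.1.le
      have hyx : 0 < y x := hypos x hx0
      have hA : 0 < y x ^ η := Real.rpow_pos_of_pos hyx η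
      have hD : 0 < P * y x ^ η + R := by positivity
      have h1 := hptwise x ⟨hx0, hx.2.le⟩
      have hE : -((P * y x ^ η + R) * y x ^ (-θ)) ≤ 0 := by
        have : 0 < y x ^ (-θ) := Real.rpow_pos_of_pos hyx _
        nlinarith
      have h3 := mul_le_mul_of_nonpos_left h1 hE
      have hinv : y x ^ (-θ) * y x ^ θ = 1 := by
        rw [← Real.rpow_add hyx]; simp
      have h4 : -((P * y x ^ η + R) * y x ^ (-θ)) *
          (-(σ x * y x ^ θ) / (P * y x ^ η + R)) = σ x := by
        field_simp
        linear_combination (σ x) * hinv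
      show σ x ≤ -((P * y x ^ η + R) * y x ^ (-θ)) * y' x
      linarith [h3, h4.symm.le]
  -- the two comparison quantities
  set a : ℝ := (1 + q1 * Sg / (2 * R)) ^ (-(1 / q1)) with hadef
  set b : ℝ := (1 + q2 * Sg / (2 * P)) ^ (-(1 / q2)) with hbdef
  have hbase1 : 0 < 1 + q1 * Sg / (2 * R) := by positivity
  have hbase2 : 0 < 1 + q2 * Sg / (2 * P) := by positivity
  have hapos : 0 < a := Real.rpow_pos_of_pos hbase1 _
  have hbpos : 0 < b := Real.rpow_pos_of_pos hbase2 _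
  have ha1 : a ^ (-q1) = 1 + q1 * Sg / (2 * R) := by
    rw [hadef, ← Real.rpow_mul hbase1.le,
      show -(1 / q1) * -q1 = 1 by field_simp, Real.rpow_one]
  have hb1 : b ^ (-q2) = 1 + q2 * Sg / (2 * P) := by
    rw [hbdef, ← Real.rpow_mul hbase2.le,
      show -(1 / q2) * -q2 = 1 by field_simp, Real.rpow_one]
  rcases le_or_gt 1 (a + b) with hab | hab
  · linarith
  · -- a + b < 1, use strict monotonicity of Φ
    have habpos : 0 < a + b := by linarith
    have eΦ : ∀ v : ℝ, Φ v = P / q2 * v ^ (-q2) + R / q1 * v ^ (-q1) - (P / q2 + R / q1) := by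
      intro v; simp only [hΦdef]; ring
    have c1 : 0 < P / q2 := by positivity
    have c2 : 0 < R / q1 := by positivity
    have hΦab : Φ (a + b) ≤ Sg := by
      have e1 : (a + b) ^ (-q2) ≤ b ^ (-q2) :=
        Real.rpow_le_rpow_of_nonpos hbpos (by linarith) (by linarith)
      have e2 : (a + b) ^ (-q1) ≤ a ^ (-q1) :=
        Real.rpow_le_rpow_of_nonpos hapos (by linarith) (by linarith)
      have m1 : P / q2 * (a + b) ^ (-q2) ≤ P / q2 * b ^ (-q2) :=
        mul_le_mul_of_nonneg_left e1 c1.le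
      have m2 : R / q1 * (a + b) ^ (-q1) ≤ R / q1 * a ^ (-q1) :=
        mul_le_mul_of_nonneg_left e2 c2.le
      have veq : P / q2 * b ^ (-q2) + R / q1 * a ^ (-q1) - (P / q2 + R / q1) = Sg := by
        rw [ha1, hb1]
        field_simp
        ring
      rw [eΦ]
      linarith
    by_contra hcon
    push_neg at hcon
    have hyt : 0 < y t := hypos t h0t
    have s1 : y t ^ (-q2) < (a + b) ^ (-q2) :=
      Real.rpow_lt_rpow_of_neg habpos hcon (by linarith)
    have s2 : y t ^ (-q1) < (a + b) ^ (-q1) :=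
      Real.rpow_lt_rpow_of_neg habpos hcon (by linarith)
    have hΦlt : Φ (y t) < Φ (a + b) := by
      rw [eΦ, eΦ]
      have m1 := mul_lt_mul_of_pos_left s1 c1
      have m2 := mul_lt_mul_of_pos_left s2 c2
      linarith
    linarith
end

section
/- Let w > 0, R > 0, θ > 1 and S ≥ 0. Define Y₁ := exp(−S/(2√w)) and Y₂ := (1 + (θ−1)S/(2R))^{−1/(θ−1)}. Then √w · ln(1/(Y₁+Y₂)) + (R/(θ−1))·((Y₁+Y₂)^{1−θ} − 1) ≤ S. -/
/-- `Y₁ + Y₂` is a supersolution of the integrated differential inequality in the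
critical case: `√w ln(1/(Y₁+Y₂)) + (R/(θ-1))((Y₁+Y₂)^{1-θ} - 1) ≤ S`. -/
theorem supersolution_critical (w R θ S : ℝ) (hw : 0 < w) (hR : 0 < R)
    (hθ : 1 < θ) (hS : 0 ≤ S) :
    Real.sqrt w * Real.log (1 /
        (Real.exp (-S / (2 * Real.sqrt w))
          + (1 + (θ - 1) * S / (2 * R)) ^ (-(1 / (θ - 1)))))
      + R / (θ - 1) *
        ((Real.exp (-S / (2 * Real.sqrt w))
          + (1 + (θ - 1) * S / (2 * R)) ^ (-(1 / (θ - 1)))) ^ (1 - θ) - 1) ≤ S := by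
  set Y1 := Real.exp (-S / (2 * Real.sqrt w)) with hY1
  set b := 1 + (θ - 1) * S / (2 * R) with hb
  have hθ0 : 0 < θ - 1 := by linarith
  have hb1 : 1 ≤ b := by
    have h : 0 ≤ (θ - 1) * S / (2 * R) := by positivity
    show (1:ℝ) ≤ 1 + (θ - 1) * S / (2 * R)
    linarith
  have hb0 : 0 < b := lt_of_lt_of_le one_pos hb1
  set Y2 := b ^ (-(1 / (θ - 1))) with hY2
  have hY1pos : 0 < Y1 := Real.exp_pos _
  have hY2pos : 0 < Y2 := Real.rpow_pos_of_pos hb0 _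
  have hw' : 0 < Real.sqrt w := Real.sqrt_pos.2 hw
  have h1 : Real.sqrt w * Real.log (1 / (Y1 + Y2)) ≤ S / 2 := by
    rw [one_div, Real.log_inv]
    have hle : Real.log Y1 ≤ Real.log (Y1 + Y2) :=
      Real.log_le_log hY1pos (by linarith)
    have hlY1 : Real.log Y1 = -S / (2 * Real.sqrt w) := Real.log_exp _
    have h2' : -Real.log (Y1 + Y2) ≤ S / (2 * Real.sqrt w) := by
      rw [hlY1] at hle
      have : -S / (2 * Real.sqrt w) = -(S / (2 * Real.sqrt w)) := by ring
      rw [this] at hle; linarith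
    calc Real.sqrt w * -Real.log (Y1 + Y2)
        ≤ Real.sqrt w * (S / (2 * Real.sqrt w)) :=
          mul_le_mul_of_nonneg_left h2' hw'.le
      _ = S / 2 := by field_simp
  have h2 : R / (θ - 1) * ((Y1 + Y2) ^ (1 - θ) - 1) ≤ S / 2 := by
    have hle : (Y1 + Y2) ^ (1 - θ) ≤ Y2 ^ (1 - θ) :=
      Real.rpow_le_rpow_of_nonpos hY2pos (by linarith) (by linarith)
    have hY2pow : Y2 ^ (1 - θ) = b := by
      have he : (-(1 / (θ - 1))) * (1 - θ) = 1 := by field_simp; ring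
      rw [hY2, ← Real.rpow_mul hb0.le, he, Real.rpow_one]
    rw [hY2pow] at hle
    have : R / (θ - 1) * ((Y1 + Y2) ^ (1 - θ) - 1) ≤ R / (θ - 1) * (b - 1) := by
      apply mul_le_mul_of_nonneg_left (by linarith) (by positivity)
    have hbval : R / (θ - 1) * (b - 1) = S / 2 := by
      rw [hb]; field_simp; ring
    linarith
  linarith
end

section
/- Let w > 0, R > 0, θ > 1, 0 ≤ η < θ − 1 and S ≥ 0. Define G(v) := (√w/(θ−η−1))·(v^{η+1−θ} − 1) + (R/(θ−1))·(v^{1−θ} − 1) for v > 0, and set Y₂ := (1 + (θ−1)S/(2R))^{−1/(θ−1)} and Y₃ := (1 + (θ−η−1)S/(2√w))^{−1/(θ−η−1)}. Then G(Y₂ + Y₃) ≤ S. -/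
/-- `Y₂ + Y₃` is a supersolution of the integrated differential inequality in the
subcritical case: `G(Y₂ + Y₃) ≤ S` where
`G(v) = (√w/(θ-η-1))(v^{η+1-θ} - 1) + (R/(θ-1))(v^{1-θ} - 1)`. -/
theorem supersolution_subcritical (w R θ η S : ℝ) (hw : 0 < w) (hR : 0 < R)
    (hθ : 1 < θ) (hη0 : 0 ≤ η) (hη : η < θ - 1) (hS : 0 ≤ S) :
    Real.sqrt w / (θ - η - 1) *
        (((1 + (θ - 1) * S / (2 * R)) ^ (-(1 / (θ - 1)))
          + (1 + (θ - η - 1) * S / (2 * Real.sqrt w)) ^ (-(1 / (θ - η - 1))))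
            ^ (η + 1 - θ) - 1)
      + R / (θ - 1) *
        (((1 + (θ - 1) * S / (2 * R)) ^ (-(1 / (θ - 1)))
          + (1 + (θ - η - 1) * S / (2 * Real.sqrt w)) ^ (-(1 / (θ - η - 1))))
            ^ (1 - θ) - 1) ≤ S := by
  have hsw : 0 < Real.sqrt w := Real.sqrt_pos.mpr hw
  have hc : 0 < θ - η - 1 := by linarith
  have hd : 0 < θ - 1 := by linarith
  set A : ℝ := 1 + (θ - η - 1) * S / (2 * Real.sqrt w) with hA
  set B : ℝ := 1 + (θ - 1) * S / (2 * R) with hB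
  have hA1 : 1 ≤ A := by
    have : 0 ≤ (θ - η - 1) * S / (2 * Real.sqrt w) :=
      div_nonneg (mul_nonneg hc.le hS) (by positivity)
    rw [hA]; linarith
  have hB1 : 1 ≤ B := by
    have : 0 ≤ (θ - 1) * S / (2 * R) := div_nonneg (mul_nonneg hd.le hS) (by positivity)
    rw [hB]; linarith
  have hApos : 0 < A := lt_of_lt_of_le one_pos hA1
  have hBpos : 0 < B := lt_of_lt_of_le one_pos hB1
  set Y₂ : ℝ := B ^ (-(1 / (θ - 1))) with hY2
  set Y₃ : ℝ := A ^ (-(1 / (θ - η - 1))) with hY3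
  have hY2pos : 0 < Y₂ := Real.rpow_pos_of_pos hBpos _
  have hY3pos : 0 < Y₃ := Real.rpow_pos_of_pos hApos _
  have hvpos : 0 < Y₂ + Y₃ := by linarith
  -- key bounds
  have key3 : (Y₂ + Y₃) ^ (η + 1 - θ) ≤ A := by
    have h1 : (Y₂ + Y₃) ^ (η + 1 - θ) ≤ Y₃ ^ (η + 1 - θ) :=
      Real.rpow_le_rpow_of_nonpos hY3pos (by linarith) (by linarith)
    have h2 : Y₃ ^ (η + 1 - θ) = A := by
      rw [hY3, ← Real.rpow_mul hApos.le,
        show (-(1 / (θ - η - 1))) * (η + 1 - θ) = 1 by field_simp; try ring, Real.rpow_one]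
    calc (Y₂ + Y₃) ^ (η + 1 - θ) ≤ Y₃ ^ (η + 1 - θ) := h1
    _ = A := h2
  have key2 : (Y₂ + Y₃) ^ (1 - θ) ≤ B := by
    have h1 : (Y₂ + Y₃) ^ (1 - θ) ≤ Y₂ ^ (1 - θ) :=
      Real.rpow_le_rpow_of_nonpos hY2pos (by linarith) (by linarith)
    have h2 : Y₂ ^ (1 - θ) = B := by
      rw [hY2, ← Real.rpow_mul hBpos.le]
      rw [show (-(1 / (θ - 1))) * (1 - θ) = 1 by field_simp; try ring, Real.rpow_one]
    calc (Y₂ + Y₃) ^ (1 - θ) ≤ Y₂ ^ (1 - θ) := h1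
    _ = B := h2
  have t1 : Real.sqrt w / (θ - η - 1) * ((Y₂ + Y₃) ^ (η + 1 - θ) - 1) ≤ S / 2 := by
    have : Real.sqrt w / (θ - η - 1) * ((Y₂ + Y₃) ^ (η + 1 - θ) - 1)
        ≤ Real.sqrt w / (θ - η - 1) * (A - 1) := by
      apply mul_le_mul_of_nonneg_left (by linarith) (by positivity)
    have hAe : Real.sqrt w / (θ - η - 1) * (A - 1) = S / 2 := by
      rw [hA]; field_simp; ring
    linarith
  have t2 : R / (θ - 1) * ((Y₂ + Y₃) ^ (1 - θ) - 1) ≤ S / 2 := by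
    have : R / (θ - 1) * ((Y₂ + Y₃) ^ (1 - θ) - 1) ≤ R / (θ - 1) * (B - 1) := by
      apply mul_le_mul_of_nonneg_left (by linarith) (by positivity)
    have hBe : R / (θ - 1) * (B - 1) = S / 2 := by
      rw [hB]; field_simp; ring
    linarith
  linarith
end

section
/- Fix ν ∈ [0,1]. There exists a constant C_ν > 0 depending only on ν with the following property. Let M_ν > 0, R > 0 and γ₀ > 0 with γ₀ ≤ R², and define M(ν,δ) := δ^{(ν−1)/(ν+1)} · M_ν^{2/(ν+1)} for δ > 0. Let (β_k)_{k≥0}, (α_k)_{k≥0} and (M_k)_{k≥1} be positive sequences such that β₀ = 1, β_{k+1} = β_k/(1+α_k), α_k = β_k√γ₀ / √(β_k M_{k+1} + R²), and M_{k+1} ≤ 2√2 · M(ν, β_{k+1}/(k+1)) for all k ≥ 0. Then for all k ≥ 1: β_k ≤ C_ν·( R/(√γ₀ · k) + M_ν/(γ₀^{(1+ν)/2} · k^{(1+3ν)/2}) ). -/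
set_option maxHeartbeats 1000000 in
/-- Decay estimate of the step parameters `β_k` in the convex case `μ = 0`:
`β_k ≤ C_ν (R/(√γ₀ k) + M_ν/(γ₀^{(1+ν)/2} k^{(1+3ν)/2}))`. -/
theorem beta_decay_convex (ν : ℝ) (hν0 : 0 ≤ ν) (hν1 : ν ≤ 1) :
    ∃ C : ℝ, 0 < C ∧
      ∀ (Mν R γ0 : ℝ), 0 < Mν → 0 < R → 0 < γ0 → γ0 ≤ R ^ 2 →
      ∀ (β α M : ℕ → ℝ),
        β 0 = 1 →
        (∀ k, 0 < β k) → (∀ k, 0 < α k) → (∀ k, 0 < M (k + 1)) →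
        (∀ k, β (k + 1) = β k / (1 + α k)) →
        (∀ k, α k = β k * Real.sqrt γ0 / Real.sqrt (β k * M (k + 1) + R ^ 2)) →
        (∀ k : ℕ, M (k + 1) ≤ 2 * Real.sqrt 2 *
          ((β (k + 1) / (k + 1)) ^ ((ν - 1) / (ν + 1)) * Mν ^ (2 / (ν + 1)))) →
        ∀ k : ℕ, 1 ≤ k →
          β k ≤ C * (R / (Real.sqrt γ0 * k)
            + Mν / (γ0 ^ ((1 + ν) / 2) * (k : ℝ) ^ ((1 + 3 * ν) / 2))) := by
  refine ⟨400, by norm_num, ?_⟩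
  intro Mν R γ0 hM hR hγ hγR β α M hβ0 hβpos hαpos hMpos hβrec hαdef hMbound
  have hν1p : (0:ℝ) < ν + 1 := by linarith
  set θ : ℝ := ν / (ν + 1) with hθ
  set e : ℝ := (1 - ν) / (2 * (ν + 1)) with he
  set p : ℝ := (1 + 3 * ν) / 2 with hp
  set K : ℕ → ℝ := fun k => Mν ^ (1 / (ν + 1)) * ((k : ℝ) + 1) ^ e with hK
  set u : ℝ := Real.sqrt γ0 / R with hu
  set v : ℝ := γ0 ^ ((1 + ν) / 2) / Mν with hv
  set φ : ℕ → ℝ := fun k => (1 / 400) * min (u * k) (v * (k : ℝ) ^ p) with hφ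
  have hsγ : 0 < Real.sqrt γ0 := Real.sqrt_pos.mpr hγ
  have hγR' : Real.sqrt γ0 ≤ R := by
    have := Real.sqrt_le_sqrt hγR
    rwa [Real.sqrt_sq hR.le] at this
  have hupos : 0 < u := div_pos hsγ hR
  have hu1 : u ≤ 1 := by
    rw [hu, div_le_one hR]; exact hγR'
  have hvpos : 0 < v := div_pos (Real.rpow_pos_of_pos hγ _) hM
  have hKpos : ∀ k : ℕ, 0 < K k := fun k =>
    mul_pos (Real.rpow_pos_of_pos hM _)
      (Real.rpow_pos_of_pos (by positivity) _)
  have hθ0 : 0 ≤ θ := by positivity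
  have hθ1 : θ ≤ 1 := by
    rw [hθ, div_le_one hν1p]; linarith
  have h1θ : 1 - θ = 1 / (ν + 1) := by
    rw [hθ]; field_simp; ring
  -- β is at most 1
  have hβle1 : ∀ k, β k ≤ 1 := by
    intro k
    induction k with
    | zero => exact hβ0.le
    | succ n ih =>
      rw [hβrec n, div_le_one (by linarith [hαpos n])]
      nlinarith [hαpos n, hβpos n]
  -- α at most 1
  have hα1 : ∀ k, α k ≤ 1 := by
    intro k
    have hden : R ≤ Real.sqrt (β k * M (k + 1) + R ^ 2) := by
      have : R = Real.sqrt (R ^ 2) := (Real.sqrt_sq hR.le).symm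
      rw [this]
      exact Real.sqrt_le_sqrt (by nlinarith [hβpos k, hMpos k, Real.sq_sqrt hR.le])
    rw [hαdef k]
    rw [div_le_one (lt_of_lt_of_le hR hden)]
    calc β k * Real.sqrt γ0 ≤ 1 * R := by
          apply mul_le_mul (hβle1 k) hγR' hsγ.le zero_le_one
      _ = R := one_mul R
      _ ≤ _ := hden
  have hhalf : ∀ k, β k / 2 ≤ β (k + 1) := by
    intro k
    rw [hβrec k]
    apply div_le_div_of_nonneg_left (hβpos k).le (by linarith [hαpos k]) (by linarith [hα1 k])
  -- Lemma A : sqrt (β k * M (k+1)) ≤ 3 * β k ^ θ * K k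
  have hs0 : 0 ≤ (1 - ν) / (ν + 1) := div_nonneg (by linarith) hν1p.le
  have hs1 : (1 - ν) / (ν + 1) ≤ 1 := by rw [div_le_one hν1p]; linarith
  have hA : ∀ k : ℕ, Real.sqrt (β k * M (k + 1)) ≤ 3 * β k ^ θ * K k := by
    intro k
    have hβk := hβpos k
    have hk1 : (0:ℝ) < (k:ℝ) + 1 := by positivity
    set s : ℝ := (1 - ν) / (ν + 1) with hs
    have hexp : (ν - 1) / (ν + 1) = -s := by rw [hs]; ring
    have hsqrt2 : Real.sqrt 2 ≤ 2 := by
      nlinarith [Real.sq_sqrt (by norm_num : (0:ℝ) ≤ 2), Real.sqrt_nonneg 2]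
    have hMνp : (0:ℝ) < Mν ^ (2 / (ν + 1)) := Real.rpow_pos_of_pos hM _
    have hstep1 : (β (k+1) / ((k:ℝ)+1)) ^ ((ν-1)/(ν+1)) ≤ β k ^ (-s) * (2*((k:ℝ)+1)) ^ s := by
      rw [hexp]
      have hbase : β k / (2*((k:ℝ)+1)) ≤ β (k+1) / ((k:ℝ)+1) := by
        rw [div_le_div_iff₀ (by positivity) hk1]
        nlinarith [hhalf k, hβpos (k+1)]
      calc (β (k+1)/((k:ℝ)+1)) ^ (-s)
          ≤ (β k / (2*((k:ℝ)+1))) ^ (-s) :=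
            Real.rpow_le_rpow_of_nonpos (by positivity) hbase (neg_nonpos.mpr hs0)
        _ = β k ^ (-s) * (2*((k:ℝ)+1)) ^ s := by
            rw [Real.div_rpow hβk.le (by positivity : (0:ℝ) ≤ 2*((k:ℝ)+1)),
              Real.rpow_neg (by positivity : (0:ℝ) ≤ 2*((k:ℝ)+1)), div_inv_eq_mul]
    have h2s : (2*((k:ℝ)+1)) ^ s ≤ 2 * ((k:ℝ)+1) ^ s := by
      rw [Real.mul_rpow (by norm_num) hk1.le]
      have h21 : (2:ℝ) ^ s ≤ 2 ^ (1:ℝ) := Real.rpow_le_rpow_of_exponent_le one_le_two hs1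
      rw [Real.rpow_one] at h21
      exact mul_le_mul_of_nonneg_right h21 (Real.rpow_nonneg hk1.le s)
    have e1 : β k * β k ^ (-s) = (β k ^ θ) ^ 2 := by
      nth_rewrite 1 [← Real.rpow_one (β k)]
      rw [← Real.rpow_add hβk, ← Real.rpow_natCast (β k ^ θ) 2, ← Real.rpow_mul hβk.le]
      congr 1
      rw [hs, hθ]
      push_cast
      field_simp
      ring
    have e2 : (K k) ^ 2 = Mν ^ (2/(ν+1)) * ((k:ℝ)+1) ^ s := by
      rw [hK]; dsimp only
      rw [mul_pow, ← Real.rpow_natCast (Mν ^ (1/(ν+1))) 2, ← Real.rpow_mul hM.le,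
        ← Real.rpow_natCast ((((k:ℝ))+1) ^ e) 2, ← Real.rpow_mul hk1.le]
      push_cast
      congr 1
      · congr 1
        field_simp
      · congr 1
        rw [he, hs]
        field_simp
    have hβs : (0:ℝ) < β k ^ (-s) := Real.rpow_pos_of_pos hβk _
    have hks : (0:ℝ) ≤ ((k:ℝ)+1) ^ s := Real.rpow_nonneg hk1.le s
    have hchain : β k * M (k + 1) ≤ 9 * (β k ^ θ)^2 * (K k)^2 := by
      have hMb := hMbound k
      have hc1 : M (k+1) ≤ 2*Real.sqrt 2 * (β k ^ (-s) * (2*((k:ℝ)+1)) ^ s * Mν ^ (2/(ν+1))) := by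
        calc M (k+1) ≤ 2*Real.sqrt 2 * ((β (k+1)/((k:ℝ)+1)) ^ ((ν-1)/(ν+1)) * Mν ^ (2/(ν+1))) := hMb
          _ ≤ _ := by
              apply mul_le_mul_of_nonneg_left _ (by positivity)
              exact mul_le_mul_of_nonneg_right hstep1 hMνp.le
      have hc2 : M (k+1) ≤ 2*Real.sqrt 2 * (β k ^ (-s) * (2 * ((k:ℝ)+1) ^ s) * Mν ^ (2/(ν+1))) := by
        refine le_trans hc1 ?_
        apply mul_le_mul_of_nonneg_left _ (by positivity)
        apply mul_le_mul_of_nonneg_right _ hMνp.le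
        exact mul_le_mul_of_nonneg_left h2s hβs.le
      have hc3 : β k * M (k+1) ≤ 4*Real.sqrt 2 * ((β k ^ θ)^2 * (Mν ^ (2/(ν+1)) * ((k:ℝ)+1) ^ s)) := by
        have := mul_le_mul_of_nonneg_left hc2 hβk.le
        calc β k * M (k+1) ≤ β k * (2*Real.sqrt 2 * (β k ^ (-s) * (2 * ((k:ℝ)+1) ^ s) * Mν ^ (2/(ν+1)))) := this
          _ = 4*Real.sqrt 2 * ((β k * β k ^ (-s)) * (Mν ^ (2/(ν+1)) * ((k:ℝ)+1) ^ s)) := by ring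
          _ = 4*Real.sqrt 2 * ((β k ^ θ)^2 * (Mν ^ (2/(ν+1)) * ((k:ℝ)+1) ^ s)) := by rw [e1]
      rw [e2]
      have h9 : 4*Real.sqrt 2 ≤ 9 := by linarith
      have hnn : (0:ℝ) ≤ (β k ^ θ)^2 * (Mν ^ (2/(ν+1)) * ((k:ℝ)+1) ^ s) :=
        mul_nonneg (sq_nonneg _) (mul_nonneg (Real.rpow_nonneg hM.le _) hks)
      calc β k * M (k+1) ≤ 4*Real.sqrt 2 * ((β k ^ θ)^2 * (Mν ^ (2/(ν+1)) * ((k:ℝ)+1) ^ s)) := hc3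
        _ ≤ 9 * ((β k ^ θ)^2 * (Mν ^ (2/(ν+1)) * ((k:ℝ)+1) ^ s)) :=
            mul_le_mul_of_nonneg_right h9 hnn
        _ = 9 * (β k ^ θ)^2 * (Mν ^ (2/(ν+1)) * ((k:ℝ)+1) ^ s) := by ring
    have hfin : (3 * β k ^ θ * K k)^2 = 9 * (β k ^ θ)^2 * (K k)^2 := by ring
    calc Real.sqrt (β k * M (k+1)) ≤ Real.sqrt ((3 * β k ^ θ * K k)^2) := by
          apply Real.sqrt_le_sqrt
          rw [hfin]; exact hchain
      _ = 3 * β k ^ θ * K k := Real.sqrt_sq (by positivity)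
  -- Lemma B : recursion for inverses
  have hB : ∀ k : ℕ,
      (β k)⁻¹ + Real.sqrt γ0 / 4 * min (1 / R) (((β k)⁻¹) ^ θ / K k) ≤ (β (k + 1))⁻¹ := by
    intro k
    have hβk := hβpos k
    have hMk := hMpos k
    have hsum : (0:ℝ) < β k * M (k+1) + R^2 := by positivity
    have hsq : 0 < Real.sqrt (β k * M (k+1) + R^2) := Real.sqrt_pos.mpr hsum
    have hbrec : (β (k+1))⁻¹ = (β k)⁻¹ + Real.sqrt γ0 / Real.sqrt (β k * M (k+1) + R^2) := by
      rw [hβrec k, hαdef k]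
      field_simp
    have h7 : Real.sqrt (β k * M (k+1) + R^2) ≤ Real.sqrt (β k * M (k+1)) + R := by
      have hnn : (0:ℝ) ≤ β k * M (k+1) := by positivity
      have h71 : β k * M (k+1) + R^2 ≤ (Real.sqrt (β k * M (k+1)) + R)^2 := by
        nlinarith [Real.sq_sqrt hnn, Real.sqrt_nonneg (β k * M (k+1))]
      calc Real.sqrt (β k * M (k+1) + R^2) ≤ Real.sqrt ((Real.sqrt (β k * M (k+1)) + R)^2) :=
            Real.sqrt_le_sqrt h71
        _ = _ := Real.sqrt_sq (by positivity)
    set x := β k ^ θ * K k with hx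
    have hxpos : 0 < x := mul_pos (Real.rpow_pos_of_pos hβk _) (hKpos k)
    have hmins : ((β k)⁻¹) ^ θ / K k = x⁻¹ := by
      rw [hx, Real.inv_rpow hβk.le, mul_inv, div_eq_mul_inv]
    have hup : Real.sqrt (β k * M (k+1) + R^2) ≤ 3*x + R := by
      have := hA k
      rw [hx]
      calc Real.sqrt (β k * M (k+1) + R^2) ≤ Real.sqrt (β k * M (k+1)) + R := h7
        _ ≤ 3 * (β k ^ θ * K k) + R := by rw [← mul_assoc]; linarith
    have hle : Real.sqrt γ0 / 4 * min (1/R) (((β k)⁻¹) ^ θ / K k)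
        ≤ Real.sqrt γ0 / Real.sqrt (β k * M (k+1) + R^2) := by
      rw [hmins]
      rcases le_total x R with h | h
      · have h4R : Real.sqrt (β k * M (k+1) + R^2) ≤ 4*R := by linarith
        calc Real.sqrt γ0 / 4 * min (1/R) x⁻¹ ≤ Real.sqrt γ0 / 4 * (1/R) :=
              mul_le_mul_of_nonneg_left (min_le_left _ _) (by positivity)
          _ = Real.sqrt γ0 / (4*R) := by ring
          _ ≤ _ := div_le_div_of_nonneg_left hsγ.le hsq h4R
      · have h4x : Real.sqrt (β k * M (k+1) + R^2) ≤ 4*x := by linarith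
        calc Real.sqrt γ0 / 4 * min (1/R) x⁻¹ ≤ Real.sqrt γ0 / 4 * x⁻¹ :=
              mul_le_mul_of_nonneg_left (min_le_right _ _) (by positivity)
          _ = Real.sqrt γ0 / (4*x) := by rw [div_mul_eq_mul_div, mul_comm, ← div_div]; ring_nf
          _ ≤ _ := div_le_div_of_nonneg_left hsγ.le hsq h4x
    rw [hbrec]
    linarith
  -- positivity of φ
  have hφpos : ∀ k : ℕ, 1 ≤ k → 0 < φ k := by
    intro k hk
    have hk' : (0:ℝ) < k := by exact_mod_cast hk
    apply mul_pos (by norm_num)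
    apply lt_min (mul_pos hupos hk') (mul_pos hvpos (Real.rpow_pos_of_pos hk' _))
  -- Key inequality C
  have hC : ∀ k : ℕ, 1 ≤ k →
      φ (k + 1) ≤ φ k + Real.sqrt γ0 / 4 * min (1 / R) ((φ k) ^ θ / K k) := by
    intro k hk
    have hk' : (1:ℝ) ≤ (k:ℝ) := by exact_mod_cast hk
    have hk0 : (0:ℝ) < (k:ℝ) := by linarith
    have hk1 : (0:ℝ) < (k:ℝ) + 1 := by linarith
    have hφk := hφpos k hk
    have hφknn := hφk.le
    have hp0 : 0 ≤ p := by rw [hp]; positivity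
    have hp2 : p ≤ 2 := by rw [hp]; linarith
    have he0 : 0 ≤ e := by rw [he]; exact div_nonneg (by linarith) (by linarith)
    have he12 : e ≤ 1/2 := by
      rw [he, div_le_div_iff₀ (by linarith) (by norm_num)]
      linarith
    have h1θnn : 0 ≤ 1 - θ := by linarith
    have hkpp : (0:ℝ) < (k:ℝ) ^ p := Real.rpow_pos_of_pos hk0 _
    have hsqrt2' : Real.sqrt 2 ≤ 5/3 := by
      nlinarith [Real.sq_sqrt (by norm_num : (0:ℝ) ≤ 2), Real.sqrt_nonneg 2]
    set t : ℝ := ((k:ℝ)+1)/(k:ℝ) with ht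
    have hrat1 : (1:ℝ) ≤ t := by rw [ht, le_div_iff₀ hk0]; linarith
    -- Step 1 : φ (k+1) ≤ φ k + 3 * φ k / k
    have hstep1 : φ (k+1) ≤ φ k + 3 * φ k / (k:ℝ) := by
      have hA1 : u * ((k:ℝ)+1) ≤ (u * k) * t^2 := by
        have he1 : u * ((k:ℝ)+1) = (u * k) * t := by rw [ht]; field_simp
        rw [he1]
        have h12 : t ≤ t^2 := by nlinarith
        exact mul_le_mul_of_nonneg_left h12 (by positivity)
      have hB1 : v * ((k:ℝ)+1) ^ p ≤ (v * (k:ℝ)^p) * t^2 := by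
        have he1 : ((k:ℝ)+1) = (k:ℝ) * t := by rw [ht]; field_simp
        have he2 : ((k:ℝ)+1) ^ p = (k:ℝ)^p * t^p := by
          rw [he1, Real.mul_rpow hk0.le (by linarith)]
        have h12 : t^p ≤ t^(2:ℝ) := Real.rpow_le_rpow_of_exponent_le hrat1 hp2
        have h13 : t^(2:ℝ) = t^(2:ℕ) := by
          rw [← Real.rpow_natCast t 2]; norm_num
        calc v * ((k:ℝ)+1) ^ p = v * ((k:ℝ)^p * t^p) := by rw [he2]
          _ ≤ v * ((k:ℝ)^p * t^(2:ℕ)) := by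
              apply mul_le_mul_of_nonneg_left _ hvpos.le
              apply mul_le_mul_of_nonneg_left _ hkpp.le
              rw [← h13]; exact h12
          _ = (v * (k:ℝ)^p) * t^2 := by ring
      have hmin : min (u*((k:ℝ)+1)) (v*((k:ℝ)+1)^p)
          ≤ min (u*(k:ℝ)) (v*(k:ℝ)^p) * t^2 := by
        rw [min_mul_of_nonneg _ _ (by positivity : (0:ℝ) ≤ t^2)]
        exact min_le_min hA1 hB1
      have hminnn : (0:ℝ) ≤ min (u*(k:ℝ)) (v*(k:ℝ)^p) :=
        le_min (by positivity) (mul_pos hvpos hkpp).le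
      have ht2 : t^2 ≤ 1 + 3/(k:ℝ) := by
        rw [ht, div_pow, div_le_iff₀ (by positivity)]
        have he3 : (1 + 3/(k:ℝ)) * (k:ℝ)^2 = (k:ℝ)^2 + 3*(k:ℝ) := by field_simp
        rw [he3]; nlinarith
      have hres : φ (k+1) ≤ φ k * (1 + 3/(k:ℝ)) := by
        rw [hφ]; dsimp only
        push_cast
        calc (1/400:ℝ) * min (u*((k:ℝ)+1)) (v*((k:ℝ)+1)^p)
            ≤ (1/400) * (min (u*(k:ℝ)) (v*(k:ℝ)^p) * t^2) :=
              mul_le_mul_of_nonneg_left hmin (by norm_num)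
          _ ≤ (1/400) * (min (u*(k:ℝ)) (v*(k:ℝ)^p) * (1+3/(k:ℝ))) := by
              apply mul_le_mul_of_nonneg_left _ (by norm_num)
              exact mul_le_mul_of_nonneg_left ht2 hminnn
          _ = (1/400 * min (u*(k:ℝ)) (v*(k:ℝ)^p)) * (1+3/(k:ℝ)) := by ring
      have he4 : φ k * (1 + 3/(k:ℝ)) = φ k + 3 * φ k / (k:ℝ) := by
        field_simp
      linarith [hres, he4.le, he4.ge]
    -- Step 2a
    have hφu : φ k ≤ (1/400)*(u*(k:ℝ)) := by
      rw [hφ]; dsimp only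
      exact mul_le_mul_of_nonneg_left (min_le_left _ _) (by norm_num)
    have h2a : 3 * φ k / (k:ℝ) ≤ Real.sqrt γ0 / 4 * (1/R) := by
      have h1 : 3 * φ k / (k:ℝ) ≤ 3 * ((1/400)*(u*(k:ℝ))) / (k:ℝ) :=
        (div_le_div_iff_of_pos_right hk0).mpr (by linarith)
      have h2 : 3 * ((1/400)*(u*(k:ℝ))) / (k:ℝ) = (3/400) * u := by
        field_simp
      have h3 : Real.sqrt γ0 / 4 * (1/R) = u / 4 := by rw [hu]; ring
      rw [h3]; rw [h2] at h1
      linarith [hupos]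
    -- Step 2b
    have hφv : φ k ≤ (1/400)*(v*(k:ℝ)^p) := by
      rw [hφ]; dsimp only
      exact mul_le_mul_of_nonneg_left (min_le_right _ _) (by norm_num)
    set P : ℝ := Mν ^ (1/(ν+1)) with hP
    have hPpos : 0 < P := Real.rpow_pos_of_pos hM _
    have hX : φ k ^ (1-θ) ≤ (1/20) * (Real.sqrt γ0 * (k:ℝ)^(p*(1-θ)) / P) := by
      have m1 : φ k ^ (1-θ) ≤ ((1/400)*(v*(k:ℝ)^p)) ^ (1-θ) :=
        Real.rpow_le_rpow hφknn hφv h1θnn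
      have m2 : ((1/400)*(v*(k:ℝ)^p)) ^ (1-θ)
          = (1/400:ℝ)^(1-θ) * (v^(1-θ) * ((k:ℝ)^p)^(1-θ)) := by
        rw [Real.mul_rpow (by norm_num) (by positivity),
          Real.mul_rpow hvpos.le (by positivity)]
      have m3 : ((k:ℝ)^p)^(1-θ) = (k:ℝ)^(p*(1-θ)) := by
        rw [← Real.rpow_mul hk0.le]
      have m4 : v^(1-θ) = Real.sqrt γ0 / P := by
        rw [hv, hP, Real.div_rpow (Real.rpow_nonneg hγ.le _) hM.le,
          ← Real.rpow_mul hγ.le, h1θ]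
        congr 1
        rw [Real.sqrt_eq_rpow]
        congr 1
        field_simp
        ring
      have m5 : (1/400:ℝ)^(1-θ) ≤ 1/20 := by
        have m51 : (1/400:ℝ)^(1-θ) ≤ (1/400:ℝ)^((1:ℝ)/2) := by
          apply Real.rpow_le_rpow_of_exponent_ge (by norm_num) (by norm_num)
          rw [h1θ, div_le_div_iff₀ (by norm_num) hν1p]
          linarith
        have m52 : (1/400:ℝ)^((1:ℝ)/2) = 1/20 := by
          rw [show (1/400:ℝ) = (1/20)^(2:ℕ) by norm_num,
            ← Real.rpow_natCast (1/20:ℝ) 2, ← Real.rpow_mul (by norm_num)]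
          norm_num
        linarith
      have m6 : (0:ℝ) ≤ v^(1-θ) * ((k:ℝ)^p)^(1-θ) := by positivity
      calc φ k ^ (1-θ) ≤ (1/400:ℝ)^(1-θ) * (v^(1-θ) * ((k:ℝ)^p)^(1-θ)) := by
            rw [← m2]; exact m1
        _ ≤ (1/20) * (v^(1-θ) * ((k:ℝ)^p)^(1-θ)) := mul_le_mul_of_nonneg_right m5 m6
        _ = (1/20) * (Real.sqrt γ0 * (k:ℝ)^(p*(1-θ)) / P) := by
            rw [m3, m4]; field_simp
    have hke : ((k:ℝ)+1)^e ≤ Real.sqrt 2 * (k:ℝ)^e := by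
      have g1 : ((k:ℝ)+1)^e ≤ (2*(k:ℝ))^e :=
        Real.rpow_le_rpow hk1.le (by linarith) he0
      have g2 : (2*(k:ℝ))^e = (2:ℝ)^e * (k:ℝ)^e := Real.mul_rpow (by norm_num) hk0.le
      have g3 : (2:ℝ)^e ≤ (2:ℝ)^((1:ℝ)/2) :=
        Real.rpow_le_rpow_of_exponent_le one_le_two he12
      have g4 : (2:ℝ)^((1:ℝ)/2) = Real.sqrt 2 := (Real.sqrt_eq_rpow 2).symm
      calc ((k:ℝ)+1)^e ≤ (2:ℝ)^e * (k:ℝ)^e := by rw [← g2]; exact g1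
        _ ≤ Real.sqrt 2 * (k:ℝ)^e := by
            apply mul_le_mul_of_nonneg_right _ (Real.rpow_nonneg hk0.le e)
            rw [← g4]; exact g3
    have hkk : (k:ℝ)^(p*(1-θ)) * (k:ℝ)^e = (k:ℝ) := by
      rw [← Real.rpow_add hk0]
      have : p*(1-θ) + e = 1 := by
        rw [hp, h1θ, he]; field_simp; ring
      rw [this, Real.rpow_one]
    have key : 3 * φ k ^ (1-θ) / (k:ℝ) ≤ Real.sqrt γ0 / (4 * K k) := by
      rw [div_le_div_iff₀ hk0 (by positivity)]
      have hKval : K k = P * (((k:ℝ))+1)^e := by rw [hK, hP]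
      have hKb : K k ≤ P * (Real.sqrt 2 * (k:ℝ)^e) := by
        rw [hKval]
        exact mul_le_mul_of_nonneg_left hke hPpos.le
      have hφ1θnn : 0 ≤ φ k ^ (1-θ) := Real.rpow_nonneg hφknn _
      calc 3 * φ k ^ (1-θ) * (4 * K k)
          = 12 * (φ k ^ (1-θ) * K k) := by ring
        _ ≤ 12 * (((1/20) * (Real.sqrt γ0 * (k:ℝ)^(p*(1-θ)) / P))
              * (P * (Real.sqrt 2 * (k:ℝ)^e))) := by
            apply mul_le_mul_of_nonneg_left _ (by norm_num)
            exact mul_le_mul hX hKb (hKpos k).le (by positivity)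
        _ = (12*Real.sqrt 2/20) * (Real.sqrt γ0 * ((k:ℝ)^(p*(1-θ)) * (k:ℝ)^e)) := by
            field_simp
        _ = (12*Real.sqrt 2/20) * (Real.sqrt γ0 * (k:ℝ)) := by rw [hkk]
        _ ≤ Real.sqrt γ0 * (k:ℝ) := by
            nlinarith [mul_pos hsγ hk0, hsqrt2']
    have h2b : 3 * φ k / (k:ℝ) ≤ Real.sqrt γ0 / 4 * (φ k ^ θ / K k) := by
      have hmul := mul_le_mul_of_nonneg_left key (Real.rpow_nonneg hφknn θ)
      have e1 : φ k ^ θ * (3 * φ k ^ (1-θ) / (k:ℝ)) = 3 * φ k / (k:ℝ) := by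
        rw [show φ k ^ θ * (3 * φ k ^ (1-θ) / (k:ℝ))
            = 3 * (φ k ^ θ * φ k ^ (1-θ)) / (k:ℝ) by ring,
          ← Real.rpow_add hφk, show θ + (1-θ) = 1 by ring, Real.rpow_one]
      have e2 : φ k ^ θ * (Real.sqrt γ0 / (4 * K k)) = Real.sqrt γ0 / 4 * (φ k ^ θ / K k) := by
        field_simp
      rw [e1, e2] at hmul
      exact hmul
    have hminfin : 3 * φ k / (k:ℝ) ≤ Real.sqrt γ0 / 4 * min (1/R) (φ k ^ θ / K k) := by
      rcases le_total (1/R) (φ k ^ θ / K k) with h | h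
      · rw [min_eq_left h]; exact h2a
      · rw [min_eq_right h]; exact h2b
    linarith
  -- Main induction
  have hmain : ∀ k : ℕ, 1 ≤ k → φ k ≤ (β k)⁻¹ := by
    intro k hk
    induction k with
    | zero => omega
    | succ n ih =>
      rcases Nat.eq_or_lt_of_le hk with h1 | h1
      · -- n + 1 = 1, base case
        have hn : n = 0 := by omega
        subst hn
        have h1' : φ 1 ≤ 1 := by
          rw [hφ]; dsimp only
          push_cast
          rw [mul_one]
          have := min_le_left u (v * (1:ℝ) ^ p)
          linarith
        calc φ 1 ≤ 1 := h1'
          _ ≤ (β 1)⁻¹ := one_le_inv₀ (hβpos 1) |>.mpr <| id (hβle1 1)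
      · have hn : 1 ≤ n := by omega
        have ihn := ih hn
        calc φ (n + 1) ≤ φ n + Real.sqrt γ0 / 4 * min (1 / R) ((φ n) ^ θ / K n) := hC n hn
          _ ≤ (β n)⁻¹ + Real.sqrt γ0 / 4 * min (1 / R) (((β n)⁻¹) ^ θ / K n) := by
              apply add_le_add ihn
              have hx : (φ n) ^ θ ≤ ((β n)⁻¹) ^ θ :=
                Real.rpow_le_rpow (hφpos n hn).le ihn hθ0
              apply mul_le_mul_of_nonneg_left _ (by positivity)
              exact min_le_min le_rfl ((div_le_div_iff_of_pos_right (hKpos n)).mpr hx)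
          _ ≤ (β (n + 1))⁻¹ := hB n
  -- conclude
  intro k hk
  have hk' : (0:ℝ) < k := by exact_mod_cast hk
  have h1 := hmain k hk
  have hkp : 0 < (k:ℝ) ^ p := Real.rpow_pos_of_pos hk' _
  have h2 : β k ≤ (φ k)⁻¹ := (le_inv_comm₀ (hφpos k hk) (hβpos k)).mp h1
  have h3 : (φ k)⁻¹ = 400 * (min (u * k) (v * (k:ℝ) ^ p))⁻¹ := by
    rw [hφ]; dsimp only; rw [mul_inv]; norm_num
  have h4 : (min (u * k) (v * (k:ℝ) ^ p))⁻¹ ≤ (u * (k:ℝ))⁻¹ + (v * (k:ℝ) ^ p)⁻¹ := by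
    rcases le_total (u * (k:ℝ)) (v * (k:ℝ) ^ p) with h | h
    · rw [min_eq_left h]
      exact le_add_of_nonneg_right (by positivity)
    · rw [min_eq_right h]
      exact le_add_of_nonneg_left (by positivity)
  have h5 : (u * (k:ℝ))⁻¹ = R / (Real.sqrt γ0 * k) := by
    rw [hu]
    field_simp
  have h6 : (v * (k:ℝ) ^ p)⁻¹ = Mν / (γ0 ^ ((1 + ν) / 2) * (k:ℝ) ^ p) := by
    rw [hv]
    rw [div_mul_eq_mul_div, mul_comm]
    rw [inv_div]
  calc β k ≤ (φ k)⁻¹ := h2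
    _ = 400 * (min (u * k) (v * (k:ℝ) ^ p))⁻¹ := h3
    _ ≤ 400 * ((u * (k:ℝ))⁻¹ + (v * (k:ℝ) ^ p)⁻¹) := by linarith [h4]
    _ = 400 * (R / (Real.sqrt γ0 * k) + Mν / (γ0 ^ ((1 + ν) / 2) * (k:ℝ) ^ p)) := by
        rw [h5, h6]
end

section
/- Fix ν ∈ [0,1). There exists a constant C_ν > 0 depending only on ν with the following property. Let M_ν > 0, R > 0 and 0 < γ_min, and define M(ν,δ) := δ^{(ν−1)/(ν+1)} · M_ν^{2/(ν+1)} for δ > 0. Let (β_k)_{k≥0}, (α_k)_{k≥0}, (γ_k)_{k≥0} and (M_k)_{k≥1} be positive sequences such that β₀ = 1, γ_min ≤ γ_k ≤ R² for all k, β_{k+1} = β_k/(1+α_k), α_k = √(γ_k β_k) / √(β_k M_{k+1} + R²), and M_{k+1} ≤ 2√2 · M(ν, β_{k+1}/(k+1)) for all k ≥ 0. Then for all k ≥ 1: β_k ≤ C_ν·( R²/(γ_min · k²) + M_ν^{2/(1−ν)}/(γ_min^{(1+ν)/(1−ν)} · k^{(1+3ν)/(1−ν)}) ). -/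
open Real

set_option maxHeartbeats 2000000 in
/-- Decay estimate of the step parameters `β_k` in the strongly convex Hölder case
`μ > 0`, `ν < 1`:
`β_k ≤ C_ν (R²/(γ_min k²) + M_ν^{2/(1-ν)}/(γ_min^{(1+ν)/(1-ν)} k^{(1+3ν)/(1-ν)}))`. -/
theorem beta_decay_strongly_convex_holder (ν : ℝ) (hν0 : 0 ≤ ν) (hν1 : ν < 1) :
    ∃ C : ℝ, 0 < C ∧
      ∀ (Mν R γmin : ℝ), 0 < Mν → 0 < R → 0 < γmin →
      ∀ (β α γ M : ℕ → ℝ),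
        β 0 = 1 →
        (∀ k, 0 < β k) → (∀ k, 0 < α k) → (∀ k, 0 < M (k + 1)) →
        (∀ k, γmin ≤ γ k) → (∀ k, γ k ≤ R ^ 2) →
        (∀ k, β (k + 1) = β k / (1 + α k)) →
        (∀ k, α k = Real.sqrt (γ k * β k) / Real.sqrt (β k * M (k + 1) + R ^ 2)) →
        (∀ k : ℕ, M (k + 1) ≤ 2 * Real.sqrt 2 *
          ((β (k + 1) / (k + 1)) ^ ((ν - 1) / (ν + 1)) * Mν ^ (2 / (ν + 1)))) →
        ∀ k : ℕ, 1 ≤ k →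
          β k ≤ C * (R ^ 2 / (γmin * (k : ℝ) ^ 2)
            + Mν ^ (2 / (1 - ν)) /
              (γmin ^ ((1 + ν) / (1 - ν)) * (k : ℝ) ^ ((1 + 3 * ν) / (1 - ν)))) := by
  have hν1' : (0:ℝ) < 1 - ν := by linarith
  have hν2 : (0:ℝ) < ν + 1 := by linarith
  obtain ⟨s, hs_def⟩ : ∃ s : ℝ, s = (1 - ν) / (2 * (ν + 1)) := ⟨_, rfl⟩
  obtain ⟨e, he_def⟩ : ∃ e : ℝ, e = (ν - 1) / (ν + 1) := ⟨_, rfl⟩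
  obtain ⟨q, hq_def⟩ : ∃ q : ℝ, q = (1 + 3 * ν) / (1 - ν) := ⟨_, rfl⟩
  obtain ⟨m, hm_def⟩ : ∃ m : ℝ, m = max 2 q := ⟨_, rfl⟩
  have hs : 0 < s := by rw [hs_def]; positivity
  have hes : e = -(2*s) := by rw [he_def, hs_def]; field_simp; ring
  have hq0 : 0 < q := hq_def ▸ div_pos (by linarith) hν1'
  have hm2 : (2:ℝ) ≤ m := hm_def ▸ le_max_left _ _
  have hqm : q ≤ m := hm_def ▸ le_max_right _ _
  obtain ⟨c₀, hc₀_def⟩ : ∃ c : ℝ, c = 4 * Real.sqrt 2 := ⟨_, rfl⟩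
  have hc₀1 : 1 ≤ c₀ := by
    rw [hc₀_def]; nlinarith [Real.sq_sqrt (by norm_num : (2:ℝ) ≥ 0).le,
      Real.sqrt_nonneg 2, Real.sqrt_le_sqrt (by norm_num : (2:ℝ) ≤ 4)]
  have hc₀ : 0 < c₀ := by linarith
  obtain ⟨L, hL_def⟩ : ∃ L : ℝ, L = m * Real.exp m := ⟨_, rfl⟩
  have hL : 0 < L := hL_def ▸ mul_pos (by linarith) (Real.exp_pos m)
  obtain ⟨K, hK_def⟩ : ∃ K : ℝ, K = 4 * L * Real.sqrt c₀ + 2 := ⟨_, rfl⟩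
  have hsc₀1 : 1 ≤ Real.sqrt c₀ := by
    rw [show (1:ℝ) = Real.sqrt 1 by simp]; exact Real.sqrt_le_sqrt hc₀1
  have hK2 : (2:ℝ) ≤ K := by
    rw [hK_def]
    have : 0 ≤ 4 * L * Real.sqrt c₀ := by positivity
    linarith
  have hK0 : (0:ℝ) < K := by linarith
  obtain ⟨C, hC_def⟩ : ∃ C : ℝ, C = max (K ^ 2) (K ^ (1/s)) := ⟨_, rfl⟩
  have hCK2 : K ^ 2 ≤ C := hC_def ▸ le_max_left _ _
  have hC1 : (1:ℝ) ≤ C := by nlinarith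
  have hCpos : (0:ℝ) < C := by linarith
  have hsqrtC : K ≤ Real.sqrt C := by
    calc K = Real.sqrt (K ^ 2) := by rw [Real.sqrt_sq hK0.le]
    _ ≤ Real.sqrt C := Real.sqrt_le_sqrt hCK2
  have hCs : K ≤ C ^ s := by
    calc K = (K ^ (1/s)) ^ s := by
          rw [← Real.rpow_mul hK0.le, one_div, inv_mul_cancel₀ hs.ne', Real.rpow_one]
    _ ≤ C ^ s := Real.rpow_le_rpow (by positivity) (hC_def ▸ le_max_right _ _) hs.le
  refine ⟨C, hCpos, ?_⟩
  intro Mν R γmin hMν hR hγmin β α γ M hβ0 hβpos hαpos hMpos hγlo hγhi hβrec hαdef hMb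
  simp only [← he_def] at hMb
  have hβdec : ∀ k, β (k+1) ≤ β k := by
    intro k
    rw [hβrec k]
    have h1 : (1:ℝ) ≤ 1 + α k := by linarith [hαpos k]
    calc β k / (1 + α k) ≤ β k / 1 := by
          apply div_le_div_of_nonneg_left (hβpos k).le (by norm_num) h1
    _ = β k := by ring
  have hβle1 : ∀ k, β k ≤ 1 := by
    intro k
    induction k with
    | zero => rw [hβ0]
    | succ n ih => exact le_trans (hβdec n) ih
  have hαle1 : ∀ k, α k ≤ 1 := by
    intro k
    rw [hαdef k]
    have h1 : Real.sqrt (γ k * β k) ≤ R := by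
      rw [show R = Real.sqrt (R ^ 2) from (Real.sqrt_sq hR.le).symm]
      apply Real.sqrt_le_sqrt
      calc γ k * β k ≤ R ^ 2 * 1 :=
            mul_le_mul (hγhi k) (hβle1 k) (hβpos k).le (by positivity)
      _ = R ^ 2 := by ring
    have h2 : R ≤ Real.sqrt (β k * M (k + 1) + R ^ 2) := by
      apply Real.le_sqrt_of_sq_le
      linarith [mul_pos (hβpos k) (hMpos k)]
    rw [div_le_one (lt_of_lt_of_le hR h2)]
    exact h1.trans h2
  have hβhalf : ∀ k, β k / 2 ≤ β (k+1) := by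
    intro k
    rw [hβrec k]
    apply div_le_div_of_nonneg_left (hβpos k).le (by linarith [hαpos k]) (by linarith [hαle1 k])
  obtain ⟨A, hA_def⟩ : ∃ A : ℕ → ℝ, A = fun k : ℕ => R ^ 2 / (γmin * (k:ℝ) ^ 2) := ⟨_, rfl⟩
  obtain ⟨B, hB_def⟩ : ∃ B : ℕ → ℝ,
      B = fun k : ℕ => Mν ^ (2/(1-ν)) / (γmin ^ ((1+ν)/(1-ν)) * (k:ℝ) ^ q) := ⟨_, rfl⟩
  have hApos : ∀ k:ℕ, 1 ≤ k → 0 < A k := by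
    intro k hk
    have : (0:ℝ) < (k:ℝ) := by exact_mod_cast hk
    simp only [hA_def]; positivity
  have hBpos : ∀ k:ℕ, 1 ≤ k → 0 < B k := by
    intro k hk
    have : (0:ℝ) < (k:ℝ) := by exact_mod_cast hk
    simp only [hB_def]; positivity
  have hMub : ∀ k, M (k+1) ≤ c₀ * ((β k / ((k:ℝ)+1)) ^ e * Mν ^ (2/(ν+1))) := by
    intro k
    have hk1 : (0:ℝ) < (k:ℝ) + 1 := by positivity
    have hx : (0:ℝ) < β k / (2 * ((k:ℝ) + 1)) := div_pos (hβpos k) (by positivity)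
    have hxy : β k / (2 * ((k:ℝ) + 1)) ≤ β (k+1) / ((k:ℝ) + 1) := by
      rw [show β k / (2 * ((k:ℝ) + 1)) = (β k / 2) / ((k:ℝ) + 1) from (div_div _ _ _).symm]
      exact (div_le_div_iff_of_pos_right hk1).mpr (hβhalf k)
    have h1 : (β (k+1) / ((k:ℝ)+1)) ^ e ≤ (β k / (2 * ((k:ℝ)+1))) ^ e :=
      Real.rpow_le_rpow_of_nonpos hx hxy (by rw [hes]; linarith [hs])
    have h2 : (β k / (2 * ((k:ℝ)+1))) ^ e ≤ 2 * (β k / ((k:ℝ)+1)) ^ e := by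
      have hrw : β k / (2 * ((k:ℝ)+1)) = (β k / ((k:ℝ)+1)) * (2:ℝ)⁻¹ := by
        rw [← div_eq_mul_inv, div_div, mul_comm 2]
      rw [hrw, Real.mul_rpow (div_pos (hβpos k) hk1).le (by norm_num)]
      have h3 : ((2:ℝ)⁻¹) ^ e = (2:ℝ) ^ (2*s) := by
        rw [← Real.rpow_neg_one (2:ℝ), ← Real.rpow_mul (by norm_num : (0:ℝ) ≤ 2), hes]
        norm_num
      have h4 : (2:ℝ) ^ (2*s) ≤ 2 := by
        have h2s : 2 * s ≤ 1 := by
          rw [hs_def, mul_div_assoc', div_le_one (by linarith)]; linarith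
        calc (2:ℝ) ^ (2*s) ≤ (2:ℝ) ^ (1:ℝ) :=
              Real.rpow_le_rpow_of_exponent_le (by norm_num) h2s
        _ = 2 := Real.rpow_one 2
      calc (β k / ((k:ℝ)+1)) ^ e * ((2:ℝ)⁻¹) ^ e
          ≤ (β k / ((k:ℝ)+1)) ^ e * 2 := by
            apply mul_le_mul_of_nonneg_left _ (Real.rpow_nonneg (div_pos (hβpos k) hk1).le e)
            rw [h3]; exact h4
      _ = 2 * (β k / ((k:ℝ)+1)) ^ e := by ring
    have hMν : (0:ℝ) ≤ Mν ^ (2/(ν+1)) := Real.rpow_nonneg hMν.le _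
    calc M (k+1) ≤ 2 * Real.sqrt 2 * ((β (k+1) / ((k:ℝ)+1)) ^ e * Mν ^ (2/(ν+1))) := hMb k
    _ ≤ 2 * Real.sqrt 2 * ((2 * (β k / ((k:ℝ)+1)) ^ e) * Mν ^ (2/(ν+1))) := by
          apply mul_le_mul_of_nonneg_left _ (by positivity)
          exact mul_le_mul_of_nonneg_right (h1.trans h2) hMν
    _ = c₀ * ((β k / ((k:ℝ)+1)) ^ e * Mν ^ (2/(ν+1))) := by rw [hc₀_def]; ring
  have hαlb : ∀ k, min (Real.sqrt (γmin * β k) / R) (Real.sqrt (γmin / M (k+1))) / 2 ≤ α k := by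
    intro k
    have hMk := hMpos k
    have hβk := hβpos k
    have hu : (0:ℝ) < Real.sqrt (β k * M (k+1)) := Real.sqrt_pos.mpr (by positivity)
    have hnum : Real.sqrt (γmin * β k) ≤ Real.sqrt (γ k * β k) :=
      Real.sqrt_le_sqrt (mul_le_mul_of_nonneg_right (hγlo k) hβk.le)
    have hdpos : (0:ℝ) < Real.sqrt (β k * M (k+1) + R ^ 2) :=
      Real.sqrt_pos.mpr (by positivity)
    have hden : Real.sqrt (β k * M (k+1) + R ^ 2)
        ≤ 2 * max (Real.sqrt (β k * M (k+1))) R := by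
      have hxx : (0:ℝ) ≤ β k * M (k+1) := (mul_pos hβk hMk).le
      have h5 : Real.sqrt (β k * M (k+1) + R ^ 2)
          ≤ Real.sqrt (β k * M (k+1)) + R := by
        calc Real.sqrt (β k * M (k+1) + R ^ 2)
            ≤ Real.sqrt ((Real.sqrt (β k * M (k+1)) + R) ^ 2) := by
              apply Real.sqrt_le_sqrt
              rw [add_sq, Real.sq_sqrt hxx]
              have h9 : 0 ≤ 2 * Real.sqrt (β k * M (k+1)) * R :=
                mul_nonneg (mul_nonneg (by norm_num) (Real.sqrt_nonneg _)) hR.le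
              linarith
        _ = Real.sqrt (β k * M (k+1)) + R := Real.sqrt_sq (by positivity)
      have h6 := le_max_left (Real.sqrt (β k * M (k+1))) R
      have h7 := le_max_right (Real.sqrt (β k * M (k+1))) R
      linarith
    have hmax : (0:ℝ) < max (Real.sqrt (β k * M (k+1))) R := lt_max_of_lt_right hR
    have hrw : Real.sqrt (γmin / M (k+1))
        = Real.sqrt (γmin * β k) / Real.sqrt (β k * M (k+1)) := by
      rw [← Real.sqrt_div (by positivity)]
      congr 1
      field_simp
    have key2 : min (Real.sqrt (γmin * β k) / R) (Real.sqrt (γmin / M (k+1))) / 2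
        = Real.sqrt (γmin * β k) / (2 * max (Real.sqrt (β k * M (k+1))) R) := by
      rw [hrw]
      have ha : (0:ℝ) ≤ Real.sqrt (γmin * β k) := Real.sqrt_nonneg _
      rcases le_total (Real.sqrt (β k * M (k+1))) R with h | h
      · rw [max_eq_right h, min_eq_left
          (div_le_div_of_nonneg_left ha hu h)]
        rw [div_div]
        ring_nf
      · rw [max_eq_left h, min_eq_right
          (div_le_div_of_nonneg_left ha hR h)]
        rw [div_div]
        ring_nf
    rw [hαdef k, key2]
    exact div_le_div₀ (Real.sqrt_nonneg _) hnum hdpos hden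
  have key : ∀ k:ℕ, 1 ≤ k → β k ≤ C * max (A k) (B k) := by
    intro k hk
    induction k with
    | zero => omega
    | succ n ih =>
      rcases Nat.eq_or_lt_of_le hk with h1 | h1
      · -- base case n+1 = 1
        have hn0 : n = 0 := by omega
        subst hn0
        have hA1 : (1:ℝ) ≤ A 1 := by
          simp only [hA_def]
          simp only [Nat.cast_one, one_pow, mul_one]
          rw [le_div_iff₀ hγmin]
          have h2 := (hγlo 0).trans (hγhi 0)
          linarith
        calc β 1 ≤ 1 := hβle1 1
        _ ≤ A 1 := hA1
        _ ≤ max (A 1) (B 1) := le_max_left _ _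
        _ ≤ C * max (A 1) (B 1) :=
            le_mul_of_one_le_left (le_trans (hApos 1 le_rfl).le (le_max_left _ _)) hC1
      · -- inductive step, n ≥ 1
        have hn : 1 ≤ n := by omega
        have ihn := ih hn
        by_cases hcase : β n ≤ C * max (A (n+1)) (B (n+1))
        · exact le_trans (hβdec n) hcase
        push_neg at hcase
        have hnR : (0:ℝ) < (n:ℝ) := by exact_mod_cast hn
        have hn' : (1:ℝ) ≤ (n:ℝ) := by exact_mod_cast hn
        have hn1 : (0:ℝ) < (n:ℝ) + 1 := by positivity
        have hcast : ((n+1:ℕ):ℝ) = (n:ℝ) + 1 := by push_cast; ring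
        have hBpos1 : 0 < B (n+1) := hBpos (n+1) (by omega)
        have hApos1 : 0 < A (n+1) := hApos (n+1) (by omega)
        have hMn := hMpos n
        have hAn : C * A (n+1) < β n :=
          lt_of_le_of_lt (mul_le_mul_of_nonneg_left (le_max_left _ _) hCpos.le) hcase
        have hBn : C * B (n+1) < β n :=
          lt_of_le_of_lt (mul_le_mul_of_nonneg_left (le_max_right _ _) hCpos.le) hcase
        -- lower bound via the R-term
        have t1 : Real.sqrt C / ((n:ℝ)+1) ≤ Real.sqrt (γmin * β n) / R := by
          have h2 : C * A (n+1) * γmin = (Real.sqrt C * R / ((n:ℝ)+1))^2 := by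
            simp only [hA_def]
            simp only [hcast]
            rw [div_pow, mul_pow, Real.sq_sqrt hCpos.le]
            field_simp
          have h3 : Real.sqrt C * R / ((n:ℝ)+1) ≤ Real.sqrt (γmin * β n) := by
            apply Real.le_sqrt_of_sq_le
            rw [← h2]
            calc C * A (n+1) * γmin ≤ β n * γmin :=
                  mul_le_mul_of_nonneg_right hAn.le hγmin.le
            _ = γmin * β n := by ring
          calc Real.sqrt C / ((n:ℝ)+1) = (Real.sqrt C * R / ((n:ℝ)+1)) / R := by
                field_simp
          _ ≤ Real.sqrt (γmin * β n) / R := (div_le_div_iff_of_pos_right hR).mpr h3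
        -- lower bound via the M-term
        have hXpos : (0:ℝ) < C * B (n+1) / ((n:ℝ)+1) :=
          div_pos (mul_pos hCpos hBpos1) hn1
        have hXle : C * B (n+1) / ((n:ℝ)+1) ≤ β n / ((n:ℝ)+1) :=
          (div_le_div_iff_of_pos_right hn1).mpr hBn.le
        have hmono : (β n / ((n:ℝ)+1)) ^ e ≤ (C * B (n+1) / ((n:ℝ)+1)) ^ e :=
          Real.rpow_le_rpow_of_nonpos hXpos hXle (by rw [hes]; linarith)
        have hid : (C * B (n+1) / ((n:ℝ)+1)) ^ e * Mν ^ (2/(ν+1)) * (C^s)^2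
            = γmin * (((n:ℝ)+1))^2 := by
          have hXe : (0:ℝ) < (C * B (n+1) / ((n:ℝ)+1)) ^ e := Real.rpow_pos_of_pos hXpos e
          have hMe : (0:ℝ) < Mν ^ (2/(ν+1)) := Real.rpow_pos_of_pos hMν _
          have hCse : (0:ℝ) < (C^s)^2 := pow_pos (Real.rpow_pos_of_pos hCpos s) 2
          apply Real.log_injOn_pos
            (Set.mem_Ioi.mpr (mul_pos (mul_pos hXe hMe) hCse))
            (Set.mem_Ioi.mpr (mul_pos hγmin (pow_pos hn1 2)))
          rw [Real.log_mul (mul_pos hXe hMe).ne' hCse.ne',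
              Real.log_mul hXe.ne' hMe.ne',
              Real.log_rpow hXpos, Real.log_rpow hMν, Real.log_pow,
              Real.log_rpow hCpos,
              Real.log_mul hγmin.ne' (by positivity),
              Real.log_pow,
              Real.log_div (mul_pos hCpos hBpos1).ne' hn1.ne',
              Real.log_mul hCpos.ne' hBpos1.ne']
          have hBlog : Real.log (B (n+1)) = (2/(1-ν)) * Real.log Mν
              - (((1+ν)/(1-ν)) * Real.log γmin + q * Real.log ((n:ℝ)+1)) := by
            simp only [hB_def, hcast]
            rw [Real.log_div (ne_of_gt (Real.rpow_pos_of_pos hMν _))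
                  (ne_of_gt (mul_pos (Real.rpow_pos_of_pos hγmin _) (Real.rpow_pos_of_pos hn1 q))),
                Real.log_mul (ne_of_gt (Real.rpow_pos_of_pos hγmin _))
                  (ne_of_gt (Real.rpow_pos_of_pos hn1 q)),
                Real.log_rpow hMν, Real.log_rpow hγmin, Real.log_rpow hn1]
          rw [hBlog, hes, hs_def, hq_def]
          push_cast
          generalize Real.log C = lC
          generalize Real.log Mν = lM
          generalize Real.log γmin = lg
          generalize Real.log ((n:ℝ)+1) = ln
          field_simp
          ring
        have t2 : C ^ s / (Real.sqrt c₀ * ((n:ℝ)+1)) ≤ Real.sqrt (γmin / M (n+1)) := by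
          have h : M (n+1) * (C^s)^2 ≤ γmin * (c₀ * ((n:ℝ)+1)^2) := by
            calc M (n+1) * (C^s)^2
                ≤ (c₀ * ((β n/((n:ℝ)+1))^e * Mν^(2/(ν+1)))) * (C^s)^2 :=
                  mul_le_mul_of_nonneg_right (hMub n)
                    (pow_nonneg (Real.rpow_nonneg hCpos.le s) 2)
            _ ≤ (c₀ * ((C * B (n+1)/((n:ℝ)+1))^e * Mν^(2/(ν+1)))) * (C^s)^2 :=
                  mul_le_mul_of_nonneg_right
                    (mul_le_mul_of_nonneg_left
                      (mul_le_mul_of_nonneg_right hmono (Real.rpow_nonneg hMν.le _))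
                      hc₀.le)
                    (pow_nonneg (Real.rpow_nonneg hCpos.le s) 2)
            _ = γmin * (c₀ * ((n:ℝ)+1)^2) := by linear_combination c₀ * hid
          apply Real.le_sqrt_of_sq_le
          rw [div_pow, mul_pow, Real.sq_sqrt hc₀.le,
              div_le_div_iff₀ (by positivity) hMn]
          linarith
        -- lower bound on α n
        have hα : L / (n:ℝ) ≤ α n := by
          have hsqrtC' : 4*L*Real.sqrt c₀ + 2 ≤ Real.sqrt C := by
            have h := hsqrtC; rwa [hK_def] at h
          have hCs' : 4*L*Real.sqrt c₀ + 2 ≤ C ^ s := by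
            have h := hCs; rwa [hK_def] at h
          have hmul : 4*L*1 ≤ 4*L*Real.sqrt c₀ :=
            mul_le_mul_of_nonneg_left hsc₀1 (by linarith)
          have hL1 : 4*L ≤ Real.sqrt C := by linarith
          have hL2 : 4*L ≤ C^s / Real.sqrt c₀ := by
            rw [le_div_iff₀ (by positivity)]
            linarith
          have hmin : 4*L/((n:ℝ)+1) ≤
              min (Real.sqrt C/((n:ℝ)+1)) (C^s/(Real.sqrt c₀*((n:ℝ)+1))) := by
            apply le_min
            · exact (div_le_div_iff_of_pos_right hn1).mpr hL1
            · rw [show C^s/(Real.sqrt c₀*((n:ℝ)+1)) = (C^s/Real.sqrt c₀)/((n:ℝ)+1)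
                from (div_div _ _ _).symm]
              exact (div_le_div_iff_of_pos_right hn1).mpr hL2
          have h1 : min (Real.sqrt C/((n:ℝ)+1)) (C^s/(Real.sqrt c₀*((n:ℝ)+1))) / 2 ≤
              min (Real.sqrt (γmin * β n) / R) (Real.sqrt (γmin / M (n+1))) / 2 :=
            (div_le_div_iff_of_pos_right (by norm_num)).mpr (min_le_min t1 t2)
          have h2 : L/(n:ℝ) ≤ 4*L/((n:ℝ)+1)/2 := by
            rw [div_div, div_le_div_iff₀ hnR (by positivity)]
            have hmul2 : L*1 ≤ L*(n:ℝ) := mul_le_mul_of_nonneg_left hn' hL.le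
            linarith
          linarith [hαlb n, h1, h2, hmin]
        -- ratio bound
        have hbase1 : (1:ℝ) ≤ ((n:ℝ)+1)/(n:ℝ) := by
          rw [le_div_iff₀ hnR]; linarith
        have hratio : (((n:ℝ)+1)/(n:ℝ)) ^ m ≤ 1 + α n := by
          have e2 : Real.log (((n:ℝ)+1)/(n:ℝ)) ≤ 1/(n:ℝ) := by
            have h5 := Real.log_le_sub_one_of_pos
              (show (0:ℝ) < ((n:ℝ)+1)/(n:ℝ) by positivity)
            have h6 : ((n:ℝ)+1)/(n:ℝ) - 1 = 1/(n:ℝ) := by field_simp; ring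
            linarith
          have e3 : Real.log (((n:ℝ)+1)/(n:ℝ)) * m ≤ m/(n:ℝ) := by
            calc Real.log (((n:ℝ)+1)/(n:ℝ)) * m ≤ (1/(n:ℝ)) * m :=
                  mul_le_mul_of_nonneg_right e2 (by linarith)
            _ = m/(n:ℝ) := by ring
          have hx0 : (0:ℝ) ≤ m/(n:ℝ) := div_nonneg (by linarith) hnR.le
          have e4 : Real.exp (m/(n:ℝ)) ≤ 1 + L/(n:ℝ) := by
            have h5 : Real.exp (m/(n:ℝ)) * (1 - m/(n:ℝ)) ≤ 1 := by
              have h8 := Real.add_one_le_exp (-(m/(n:ℝ)))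
              calc Real.exp (m/(n:ℝ)) * (1 - m/(n:ℝ))
                  ≤ Real.exp (m/(n:ℝ)) * Real.exp (-(m/(n:ℝ))) := by
                    apply mul_le_mul_of_nonneg_left _ (Real.exp_pos _).le
                    linarith
              _ = 1 := by rw [← Real.exp_add]; simp
            have h6 : Real.exp (m/(n:ℝ)) ≤ Real.exp m := by
              apply Real.exp_le_exp.mpr
              rw [div_le_iff₀ hnR]
              have hmul3 : m*1 ≤ m*(n:ℝ) := mul_le_mul_of_nonneg_left hn' (by linarith)
              linarith
            have h7 : Real.exp (m/(n:ℝ)) ≤ 1 + (m/(n:ℝ)) * Real.exp (m/(n:ℝ)) := by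
              linarith [h5]
            calc Real.exp (m/(n:ℝ)) ≤ 1 + (m/(n:ℝ)) * Real.exp (m/(n:ℝ)) := h7
            _ ≤ 1 + (m/(n:ℝ)) * Real.exp m := by
                  have := mul_le_mul_of_nonneg_left h6 hx0
                  linarith
            _ = 1 + L/(n:ℝ) := by rw [hL_def]; ring
          calc (((n:ℝ)+1)/(n:ℝ)) ^ m
              = Real.exp (Real.log (((n:ℝ)+1)/(n:ℝ)) * m) :=
                Real.rpow_def_of_pos (by positivity) m
          _ ≤ Real.exp (m/(n:ℝ)) := Real.exp_le_exp.mpr e3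
          _ ≤ 1 + L/(n:ℝ) := e4
          _ ≤ 1 + α n := by linarith
        -- ratio of the bounds
        have hDA : A n ≤ (((n:ℝ)+1)/(n:ℝ)) ^ m * A (n+1) := by
          have h1 : A n = (((n:ℝ)+1)/(n:ℝ)) ^ (2:ℝ) * A (n+1) := by
            simp only [hA_def, hcast]
            rw [show ((2:ℝ)) = ((2:ℕ):ℝ) by norm_num, Real.rpow_natCast]
            field_simp
          rw [h1]
          exact mul_le_mul_of_nonneg_right
            (Real.rpow_le_rpow_of_exponent_le hbase1 hm2) hApos1.le
        have hDB : B n ≤ (((n:ℝ)+1)/(n:ℝ)) ^ m * B (n+1) := by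
          have h1 : B n = (((n:ℝ)+1)/(n:ℝ)) ^ q * B (n+1) := by
            simp only [hB_def, hcast]
            rw [Real.div_rpow hn1.le hnR.le]
            have hq1 : ((n:ℝ)+1) ^ q ≠ 0 := ne_of_gt (Real.rpow_pos_of_pos hn1 q)
            have hq2 : (n:ℝ) ^ q ≠ 0 := ne_of_gt (Real.rpow_pos_of_pos hnR q)
            have hγq : γmin ^ ((1+ν)/(1-ν)) ≠ 0 := ne_of_gt (Real.rpow_pos_of_pos hγmin _)
            field_simp
          rw [h1]
          exact mul_le_mul_of_nonneg_right
            (Real.rpow_le_rpow_of_exponent_le hbase1 hqm) hBpos1.le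
        have hrm : (0:ℝ) ≤ (((n:ℝ)+1)/(n:ℝ)) ^ m := Real.rpow_nonneg (by positivity) m
        have hD : max (A n) (B n) ≤ (((n:ℝ)+1)/(n:ℝ)) ^ m * max (A (n+1)) (B (n+1)) := by
          apply max_le
          · exact hDA.trans (mul_le_mul_of_nonneg_left (le_max_left _ _) hrm)
          · exact hDB.trans (mul_le_mul_of_nonneg_left (le_max_right _ _) hrm)
        have hαn1 : (0:ℝ) < 1 + α n := by linarith [hαpos n]
        have hmaxpos : (0:ℝ) < max (A (n+1)) (B (n+1)) :=
          lt_of_lt_of_le hApos1 (le_max_left _ _)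
        calc β (n+1) = β n / (1 + α n) := hβrec n
        _ ≤ (C * max (A n) (B n)) / (1 + α n) := (div_le_div_iff_of_pos_right hαn1).mpr ihn
        _ ≤ (C * ((((n:ℝ)+1)/(n:ℝ)) ^ m * max (A (n+1)) (B (n+1)))) / (1 + α n) :=
            (div_le_div_iff_of_pos_right hαn1).mpr (mul_le_mul_of_nonneg_left hD hCpos.le)
        _ ≤ C * max (A (n+1)) (B (n+1)) := by
            rw [div_le_iff₀ hαn1]
            linarith [mul_le_mul_of_nonneg_left hratio (mul_pos hCpos hmaxpos).le]
  intro k hk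
  calc β k ≤ C * max (A k) (B k) := key k hk
  _ ≤ C * (A k + B k) := by
      apply mul_le_mul_of_nonneg_left _ hCpos.le
      exact max_le (le_add_of_nonneg_right (hBpos k hk).le) (le_add_of_nonneg_left (hApos k hk).le)
  _ = C * (R ^ 2 / (γmin * (k : ℝ) ^ 2)
            + Mν ^ (2 / (1 - ν)) /
              (γmin ^ ((1 + ν) / (1 - ν)) * (k : ℝ) ^ ((1 + 3 * ν) / (1 - ν)))) := by
      simp only [hA_def, hB_def, hq_def]
end

section
/- There exists an absolute constant C > 0 with the following property. Let L > 0, R > 0 and 0 < γ_min. Let (β_k)_{k≥0}, (α_k)_{k≥0}, (γ_k)_{k≥0} and (M_k)_{k≥1} be positive sequences such that β₀ = 1, γ_min ≤ γ_k ≤ R² for all k, β_{k+1} = β_k/(1+α_k), α_k = √(γ_k β_k) / √(β_k M_{k+1} + R²), and M_{k+1} ≤ 2√2·L for all k ≥ 0. Then for all k ≥ 1: β_k ≤ C·( R²/(γ_min · k²) + exp(−(k/(8√3))·√(γ_min/L)) ). -/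
private lemma sqrt2_le_32 : Real.sqrt 2 ≤ 3/2 := by
  rw [show (3/2:ℝ) = Real.sqrt ((3/2)^2) from (Real.sqrt_sq (by norm_num)).symm]
  exact Real.sqrt_le_sqrt (by norm_num)

private lemma sqrt2_ge_98 : (9/8:ℝ) ≤ Real.sqrt 2 := by
  rw [show (9/8:ℝ) = Real.sqrt ((9/8)^2) from (Real.sqrt_sq (by norm_num)).symm]
  exact Real.sqrt_le_sqrt (by norm_num)

private lemma one_le_sqrt2 : (1:ℝ) ≤ Real.sqrt 2 := le_trans (by norm_num) sqrt2_ge_98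

private lemma sq_le_pow_aux : ∀ m : ℕ, (m:ℝ)^2 ≤ 4 * (2*Real.sqrt 2)^m := by
  intro m
  induction m with
  | zero => norm_num
  | succ n ih =>
    have hpos : (0:ℝ) < 2*Real.sqrt 2 := by nlinarith [one_le_sqrt2]
    rcases Nat.lt_or_ge n 2 with h | h
    · interval_cases n <;> push_cast <;> nlinarith [one_le_sqrt2]
    · have hn : (2:ℝ) ≤ (n:ℝ) := by exact_mod_cast h
      have h1 : ((n:ℝ)+1)^2 ≤ (2*Real.sqrt 2) * (n:ℝ)^2 := by
        nlinarith [sqrt2_ge_98, sq_nonneg ((n:ℝ)-2)]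
      have h2 : (2*Real.sqrt 2) * (n:ℝ)^2 ≤ (2*Real.sqrt 2) * (4*(2*Real.sqrt 2)^n) :=
        mul_le_mul_of_nonneg_left ih hpos.le
      calc ((n+1:ℕ):ℝ)^2 = ((n:ℝ)+1)^2 := by push_cast; ring
        _ ≤ (2*Real.sqrt 2) * (4*(2*Real.sqrt 2)^n) := le_trans h1 h2
        _ = 4 * (2*Real.sqrt 2)^(n+1) := by rw [pow_succ]; ring

private lemma sqrt_one_add_ge {t : ℝ} (h0 : 0 ≤ t) (h3 : t ≤ 3) :
    1 + t/3 ≤ Real.sqrt (1+t) := by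
  rw [Real.le_sqrt (by linarith) (by linarith)]
  nlinarith

set_option maxHeartbeats 1000000 in
/-- Decay estimate of the step parameters `β_k` in the strongly convex Lipschitz
case (`ν = 1`): `β_k ≤ C (R²/(γ_min k²) + exp(-(k/(8√3))√(γ_min/L)))`. -/
theorem beta_decay_strongly_convex_lipschitz :
    ∃ C : ℝ, 0 < C ∧
      ∀ (L R γmin : ℝ), 0 < L → 0 < R → 0 < γmin →
      ∀ (β α γ M : ℕ → ℝ),
        β 0 = 1 →
        (∀ k, 0 < β k) → (∀ k, 0 < α k) → (∀ k, 0 < M (k + 1)) →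
        (∀ k, γmin ≤ γ k) → (∀ k, γ k ≤ R ^ 2) →
        (∀ k, β (k + 1) = β k / (1 + α k)) →
        (∀ k, α k = Real.sqrt (γ k * β k) / Real.sqrt (β k * M (k + 1) + R ^ 2)) →
        (∀ k : ℕ, M (k + 1) ≤ 2 * Real.sqrt 2 * L) →
        ∀ k : ℕ, 1 ≤ k →
          β k ≤ C * (R ^ 2 / (γmin * (k : ℝ) ^ 2)
            + Real.exp (-((k : ℝ) / (8 * Real.sqrt 3)) * Real.sqrt (γmin / L))) := by
  refine ⟨72, by norm_num, ?_⟩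
  intro L R γmin hL hR hγm β α γ M hβ0 hβpos hαpos hMpos hγlo hγhi hrec hαdef hM k hk
  have h2pos : (0:ℝ) < Real.sqrt 2 := Real.sqrt_pos.mpr (by norm_num)
  set a := Real.sqrt (γmin/(6*L)) with ha_def
  set c := Real.sqrt (γmin/(2*R^2)) with hc_def
  set θ := R^2/(3*L) with hθ_def
  have ha_pos : 0 < a := Real.sqrt_pos.mpr (by positivity)
  have hc_pos : 0 < c := Real.sqrt_pos.mpr (by positivity)
  have hγR : γmin ≤ R^2 := le_trans (hγlo 0) (hγhi 0)
  have hc1 : c ≤ 1 := by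
    rw [hc_def, show (1:ℝ) = Real.sqrt 1 from Real.sqrt_one.symm]
    apply Real.sqrt_le_sqrt
    rw [div_le_one (by positivity)]; nlinarith
  -- β is antitone
  have hdec : ∀ i j : ℕ, i ≤ j → β j ≤ β i := by
    intro i j hij
    induction j, hij using Nat.le_induction with
    | base => exact le_refl _
    | succ n hn ih =>
      refine le_trans ?_ ih
      rw [hrec n, div_le_iff₀ (by nlinarith [hαpos n])]
      nlinarith [hαpos n, hβpos n]
  have hβ1 : ∀ i, β i ≤ 1 := fun i => hβ0 ▸ hdec 0 i (Nat.zero_le i)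
  have hM3 : ∀ i, M (i+1) ≤ 3*L := fun i =>
    le_trans (hM i) (by nlinarith [sqrt2_le_32])
  -- α lower bounds
  have hα1 : ∀ i, θ ≤ β i → a ≤ α i := by
    intro i hθi
    have hb := hβpos i
    have hm := hMpos i
    have hD : (0:ℝ) < β i * M (i+1) + R^2 := by positivity
    have hD6 : β i * M (i+1) + R^2 ≤ 6*L*β i := by
      have h1 : β i * M (i+1) ≤ 3*L*β i := by nlinarith [hM3 i]
      have h2 : R^2 ≤ 3*L*β i := by
        rw [hθ_def, div_le_iff₀ (by positivity)] at hθi; linarith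
      linarith
    have ha_eq : a = Real.sqrt (γmin * β i) / Real.sqrt (6*L*β i) := by
      rw [ha_def, ← Real.sqrt_div (mul_nonneg hγm.le hb.le)]
      congr 1
      rw [mul_div_mul_right γmin (6*L) hb.ne']
    rw [ha_eq, hαdef i]
    exact div_le_div₀ (Real.sqrt_nonneg _)
      (Real.sqrt_le_sqrt (by nlinarith [hγlo i]))
      (Real.sqrt_pos.mpr hD) (Real.sqrt_le_sqrt hD6)
  have hα2 : ∀ i, β i ≤ θ → c * Real.sqrt (β i) ≤ α i := by
    intro i hθi
    have hb := hβpos i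
    have hm := hMpos i
    have hD : (0:ℝ) < β i * M (i+1) + R^2 := by positivity
    have hD2 : β i * M (i+1) + R^2 ≤ 2*R^2 := by
      have h1 : β i * M (i+1) ≤ θ * (3*L) := by nlinarith [hM3 i]
      have h2 : θ * (3*L) = R^2 := by rw [hθ_def]; field_simp
      linarith
    have hc_eq : c * Real.sqrt (β i) = Real.sqrt (γmin * β i) / Real.sqrt (2*R^2) := by
      rw [hc_def, ← Real.sqrt_mul (by positivity),
        ← Real.sqrt_div (mul_nonneg hγm.le hb.le)]
      congr 1
      rw [div_mul_eq_mul_div]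
    rw [hc_eq, hαdef i]
    exact div_le_div₀ (Real.sqrt_nonneg _)
      (Real.sqrt_le_sqrt (by nlinarith [hγlo i]))
      (Real.sqrt_pos.mpr hD) (Real.sqrt_le_sqrt hD2)
  -- Phase 1 geometric decay
  have h1a : (0:ℝ) < 1 + a := by linarith
  have phase1 : ∀ n : ℕ, (∀ j, j < n → θ ≤ β j) → β n ≤ ((1+a)^n)⁻¹ := by
    intro n
    induction n with
    | zero => intro _; simp [hβ0]
    | succ m ih =>
      intro h
      have hαm : a ≤ α m := hα1 m (h m (Nat.lt_succ_self m))
      have hstep : β (m+1) ≤ β m / (1+a) := by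
        rw [hrec m]
        exact div_le_div_of_nonneg_left (hβpos m).le h1a (by linarith)
      have ihm : β m ≤ ((1+a)^m)⁻¹ := ih (fun j hj => h j (Nat.lt_succ_of_lt hj))
      calc β (m+1) ≤ β m / (1+a) := hstep
        _ ≤ ((1+a)^m)⁻¹ / (1+a) := by gcongr
        _ = ((1+a)^(m+1))⁻¹ := by rw [pow_succ, mul_inv]; ring
  -- Phase 2 : 1/√β grows linearly once β ≤ θ
  have phase2 : ∀ n₀ : ℕ, β n₀ ≤ θ → ∀ i, n₀ ≤ i →
      1 + ((i:ℝ)-(n₀:ℝ))*(c/3) ≤ (Real.sqrt (β i))⁻¹ := by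
    intro n₀ hn₀ i hi
    induction i, hi using Nat.le_induction with
    | base =>
      simp only [sub_self, zero_mul, add_zero]
      have hs : (0:ℝ) < Real.sqrt (β n₀) := Real.sqrt_pos.mpr (hβpos n₀)
      have := inv_anti₀ hs (Real.sqrt_le_one.mpr (hβ1 n₀))
      simpa using this
    | succ i hi ih =>
      have hβiθ : β i ≤ θ := le_trans (hdec n₀ i hi) hn₀
      have hsi : (0:ℝ) < Real.sqrt (β i) := Real.sqrt_pos.mpr (hβpos i)
      have hsi1 : Real.sqrt (β i) ≤ 1 := Real.sqrt_le_one.mpr (hβ1 i)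
      have ht0 : 0 ≤ c * Real.sqrt (β i) := by positivity
      have ht3 : c * Real.sqrt (β i) ≤ 3 := by nlinarith
      have hαi : c * Real.sqrt (β i) ≤ α i := hα2 i hβiθ
      have hkey : (Real.sqrt (β i))⁻¹ + c/3 ≤ (Real.sqrt (β (i+1)))⁻¹ := by
        have heq : (Real.sqrt (β (i+1)))⁻¹ = Real.sqrt (1 + α i) / Real.sqrt (β i) := by
          rw [hrec i, Real.sqrt_div (hβpos i).le, inv_div]
        rw [heq]
        have hs1 : 1 + (c*Real.sqrt (β i))/3 ≤ Real.sqrt (1 + c*Real.sqrt (β i)) :=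
          sqrt_one_add_ge ht0 ht3
        have hs2 : Real.sqrt (1 + c*Real.sqrt (β i)) ≤ Real.sqrt (1 + α i) :=
          Real.sqrt_le_sqrt (by linarith)
        have hmono : (1 + (c*Real.sqrt (β i))/3) / Real.sqrt (β i) ≤
            Real.sqrt (1 + α i) / Real.sqrt (β i) := by
          gcongr
          linarith
        have hccs : c*Real.sqrt (β i)/3/Real.sqrt (β i) = c/3 := by
          rw [div_div]
          exact mul_div_mul_right c 3 hsi.ne'
        refine le_trans (le_of_eq ?_) hmono
        rw [add_div, one_div, hccs]
      push_cast
      push_cast at ih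
      linarith
  -- assembly
  have hkR : (0:ℝ) < (k:ℝ) := by exact_mod_cast Nat.lt_of_lt_of_le Nat.zero_lt_one hk
  have hEpos : 0 < Real.exp (-((k : ℝ) / (8 * Real.sqrt 3)) * Real.sqrt (γmin / L)) :=
    Real.exp_pos _
  have hPpos : 0 < R ^ 2 / (γmin * (k : ℝ) ^ 2) := by positivity
  obtain ⟨n, hn_def⟩ : ∃ n : ℕ, n = (k+1)/2 := ⟨_, rfl⟩
  have hnk : n ≤ k := by omega
  have h2n : k ≤ 2*n := by omega
  have h2n' : 2*n ≤ k+1 := by omega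
  have hnrU : (n:ℝ) ≤ ((k:ℝ)+1)/2 := by
    have h := (Nat.cast_le (α := ℝ)).mpr h2n'
    push_cast at h; linarith
  have hnrL : (k:ℝ)/2 ≤ (n:ℝ) := by
    have h := (Nat.cast_le (α := ℝ)).mpr h2n
    push_cast at h; linarith
  by_cases hcase : θ ≤ β n
  · -- geometric phase persists up to n ≥ k/2
    have hβk : β k ≤ ((1+a)^n)⁻¹ :=
      le_trans (hdec n k hnk) (phase1 n (fun j hj => le_trans hcase (hdec j n hj.le)))
    by_cases hsmall : 1 + a ≤ 2*Real.sqrt 2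
    · -- exponential decay term
      have hrate1 : (1+a)⁻¹ ≤ Real.exp (-(a/(1+a))) := by
        have h := Real.add_one_le_exp (-(a/(1+a)))
        have heq : (1+a)⁻¹ = -(a/(1+a)) + 1 := by
          field_simp
          ring
        rw [heq]; exact h
      have h2 : ((1+a)^n)⁻¹ ≤ Real.exp (-((n:ℝ)*(a/(1+a)))) := by
        rw [← inv_pow]
        calc ((1+a)⁻¹)^n ≤ (Real.exp (-(a/(1+a))))^n :=
              pow_le_pow_left₀ (by positivity) hrate1 n
          _ = Real.exp (-((n:ℝ)*(a/(1+a)))) := by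
              rw [← Real.exp_nat_mul]; ring_nf
      have h6pos : (0:ℝ) < Real.sqrt 6 := Real.sqrt_pos.mpr (by norm_num)
      have h3pos : (0:ℝ) < Real.sqrt 3 := Real.sqrt_pos.mpr (by norm_num)
      have hrid : ((k:ℝ) / (8 * Real.sqrt 3)) * Real.sqrt (γmin / L) ≤ (n:ℝ)*(a/(1+a)) := by
        have ha6 : a * Real.sqrt 6 = Real.sqrt (γmin/L) := by
          rw [ha_def, ← Real.sqrt_mul (by positivity)]
          congr 1
          field_simp
        have h26 : Real.sqrt 2 * Real.sqrt 6 = 2*Real.sqrt 3 := by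
          rw [← Real.sqrt_mul (by norm_num),
            show (2*6:ℝ) = 2^2*3 by norm_num,
            Real.sqrt_mul (by positivity), Real.sqrt_sq (by norm_num)]
        have hstep1 : a/(2*Real.sqrt 2) ≤ a/(1+a) :=
          div_le_div_of_nonneg_left ha_pos.le h1a hsmall
        have hstep2 : (k:ℝ)/2 * (a/(2*Real.sqrt 2)) ≤ (n:ℝ)*(a/(1+a)) := by
          have hq : 0 < a/(2*Real.sqrt 2) := by positivity
          calc (k:ℝ)/2 * (a/(2*Real.sqrt 2)) ≤ (n:ℝ) * (a/(2*Real.sqrt 2)) :=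
                mul_le_mul_of_nonneg_right hnrL hq.le
            _ ≤ (n:ℝ)*(a/(1+a)) := mul_le_mul_of_nonneg_left hstep1 (Nat.cast_nonneg n)
        refine le_trans (le_of_eq ?_) hstep2
        rw [← ha6, show (8:ℝ)*Real.sqrt 3 = 2*Real.sqrt 2*(2*Real.sqrt 6) by
          rw [show (2:ℝ)*Real.sqrt 2*(2*Real.sqrt 6) = 4*(Real.sqrt 2*Real.sqrt 6) by ring,
            h26]; ring]
        field_simp
      have hfinal : β k ≤ Real.exp (-((k : ℝ) / (8 * Real.sqrt 3)) * Real.sqrt (γmin / L)) := by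
        refine le_trans hβk (le_trans h2 ?_)
        rw [Real.exp_le_exp]
        linarith
      linarith [hPpos, hEpos]
    · -- large a : polynomial bound suffices
      push_neg at hsmall
      have hppos : (0:ℝ) < (2*Real.sqrt 2)^n := by positivity
      have h3 : ((1+a)^n)⁻¹ ≤ ((2*Real.sqrt 2)^n)⁻¹ := by
        apply inv_anti₀ (by positivity)
        exact pow_le_pow_left₀ (by positivity) hsmall.le n
      have h4 : (k:ℝ)^2 ≤ 16 * (2*Real.sqrt 2)^n := by
        nlinarith [sq_le_pow_aux n, hnrL, hkR.le]
      have e1 : β k * (2*Real.sqrt 2)^n ≤ 1 := by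
        have h := mul_le_mul_of_nonneg_right (le_trans hβk h3) hppos.le
        rwa [inv_mul_cancel₀ hppos.ne'] at h
      have h5 : β k ≤ 16 / (k:ℝ)^2 := by
        rw [le_div_iff₀ (by positivity)]
        nlinarith [mul_le_mul_of_nonneg_left h4 (hβpos k).le]
      have h6 : 16 / (k:ℝ)^2 ≤ 72 * (R ^ 2 / (γmin * (k : ℝ) ^ 2)) := by
        have hRg : (1:ℝ) ≤ R^2/γmin := (one_le_div hγm).mpr hγR
        calc 16/(k:ℝ)^2 ≤ (72*(R^2/γmin))/(k:ℝ)^2 := by gcongr; linarith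
          _ = 72 * (R ^ 2 / (γmin * (k : ℝ) ^ 2)) := by
              ring
      linarith [le_trans h5 h6, hEpos]
  · -- polynomial phase from n on
    push_neg at hcase
    have h5 : 1 + ((k:ℝ)-(n:ℝ))*(c/3) ≤ (Real.sqrt (β k))⁻¹ :=
      phase2 n hcase.le k hnk
    have h6 : c*(k:ℝ)/6 ≤ (Real.sqrt (β k))⁻¹ := by
      refine le_trans ?_ h5
      nlinarith [mul_nonneg (sub_nonneg.mpr hnrU) hc_pos.le, hc1, hc_pos]
    have hskpos : (0:ℝ) < Real.sqrt (β k) := Real.sqrt_pos.mpr (hβpos k)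
    have hck : (0:ℝ) < c*(k:ℝ)/6 := by positivity
    have h7 : Real.sqrt (β k) ≤ (c*(k:ℝ)/6)⁻¹ := by
      have h := inv_anti₀ hck h6
      rwa [inv_inv] at h
    have h8 : β k ≤ 36/(c^2*(k:ℝ)^2) := by
      have hsq : β k = (Real.sqrt (β k))^2 := (Real.sq_sqrt (hβpos k).le).symm
      have hinv : ((c*(k:ℝ)/6)⁻¹)^2 = 36/(c^2*(k:ℝ)^2) := by
        field_simp
        ring
      rw [hsq, ← hinv]
      exact pow_le_pow_left₀ (Real.sqrt_nonneg _) h7 2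
    have hc2 : c^2 = γmin/(2*R^2) := Real.sq_sqrt (by positivity)
    have h9 : 36/(c^2*(k:ℝ)^2) = 72 * (R^2/(γmin*(k:ℝ)^2)) := by
      rw [hc2]
      field_simp
      ring
    linarith [le_trans h8 (le_of_eq h9), hEpos]
end

section
/- Let φ : ℝ^n → ℝ be differentiable, μ ≥ 0, and let f : ℝ^n → ℝ be differentiable with f(x) ≥ f(y) + ⟨∇f(y), x − y⟩ + μ D_φ(x,y) for all x, y ∈ ℝ^n. Let A be a real m×n matrix, b ∈ ℝ^m, and suppose x* ∈ ℝ^n and λ* ∈ ℝ^m satisfy Ax* = b and ∇f(x*) + Aᵀλ* = 0. Let β₀, γ₀ > 0 and set β(t) = β₀e^{−t} and γ(t) = μ + (γ₀ − μ)e^{−t}, and assume γ(t) > 0 for all t ≥ 0. Let x, v : [0,∞) → ℝ^n and λ : [0,∞) → ℝ^m be differentiable, with t ↦ ∇φ(v(t)) differentiable, satisfying for all t ≥ 0: x'(t) = v(t) − x(t); γ(t)·(d/dt)∇φ(v(t)) = μ(∇φ(x(t)) − ∇φ(v(t))) − ∇f(x(t)) − Aᵀλ(t); β(t)·λ'(t)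 = A v(t) − b. Define E(t) := L(x(t),λ*) − L(x*,λ(t)) + γ(t)·D_φ(x*, v(t)) + (β(t)/2)‖λ(t) − λ*‖². Then E is differentiable and E'(t) ≤ −E(t) − μ·D_φ(v(t), x(t)) for all t ≥ 0. -/
open RealInnerProductSpace

/-- Along the accelerated Bregman primal-dual flow, the Lyapunov function `E`
is differentiable and satisfies `E'(t) ≤ -E(t) - μ D_φ(v(t), x(t))`. -/
theorem abpd_flow_lyapunov_derivative {n m : ℕ}
    (φ : EuclideanSpace ℝ (Fin n) → ℝ) (hφ : Differentiable ℝ φ)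
    (μ : ℝ) (hμ : 0 ≤ μ)
    (f : EuclideanSpace ℝ (Fin n) → ℝ) (hf : Differentiable ℝ f)
    (hconv : ∀ x y : EuclideanSpace ℝ (Fin n),
      f x ≥ f y + ⟪gradient f y, x - y⟫ + μ * bregman φ x y)
    (A : EuclideanSpace ℝ (Fin n) →L[ℝ] EuclideanSpace ℝ (Fin m))
    (b : EuclideanSpace ℝ (Fin m))
    (xs : EuclideanSpace ℝ (Fin n)) (ls : EuclideanSpace ℝ (Fin m))
    (hfeas : A xs = b)
    (hopt : gradient f xs + (ContinuousLinearMap.adjoint A) ls = 0)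
    (β0 γ0 : ℝ) (hβ0 : 0 < β0) (hγ0 : 0 < γ0)
    (β γ : ℝ → ℝ)
    (hβ : ∀ t, β t = β0 * Real.exp (-t))
    (hγ : ∀ t, γ t = μ + (γ0 - μ) * Real.exp (-t))
    (hγpos : ∀ t ≥ (0 : ℝ), 0 < γ t)
    (x v : ℝ → EuclideanSpace ℝ (Fin n)) (lam : ℝ → EuclideanSpace ℝ (Fin m))
    (v' : ℝ → EuclideanSpace ℝ (Fin n)) (w' : ℝ → EuclideanSpace ℝ (Fin n))
    (lam' : ℝ → EuclideanSpace ℝ (Fin m))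
    -- the flow equations on `[0, ∞)`
    (hx : ∀ t ≥ (0 : ℝ), HasDerivWithinAt x (v t - x t) (Set.Ici 0) t)
    (hv : ∀ t ≥ (0 : ℝ), HasDerivWithinAt v (v' t) (Set.Ici 0) t)
    (hw : ∀ t ≥ (0 : ℝ),
      HasDerivWithinAt (fun s => gradient φ (v s)) (w' t) (Set.Ici 0) t)
    (hweq : ∀ t ≥ (0 : ℝ), γ t • w' t
      = μ • (gradient φ (x t) - gradient φ (v t))
        - gradient f (x t) - (ContinuousLinearMap.adjoint A) (lam t))
    (hl : ∀ t ≥ (0 : ℝ), HasDerivWithinAt lam (lam' t) (Set.Ici 0) t)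
    (hleq : ∀ t ≥ (0 : ℝ), β t • lam' t = A (v t) - b)
    -- the Lyapunov function
    (E : ℝ → ℝ)
    (hE : ∀ t, E t = (f (x t) + ⟪ls, A (x t) - b⟫) - (f xs + ⟪lam t, A xs - b⟫)
      + γ t * bregman φ xs (v t) + β t / 2 * ‖lam t - ls‖ ^ 2) :
    ∃ E' : ℝ → ℝ, ∀ t ≥ (0 : ℝ),
      HasDerivWithinAt E (E' t) (Set.Ici 0) t ∧
      E' t ≤ -E t - μ * bregman φ (v t) (x t) := by
  refine ⟨fun t => ⟪gradient f (x t), v t - x t⟫ + ⟪ls, A (v t - x t)⟫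
      - ⟪lam' t, A xs - b⟫
      + ((μ - γ t) * bregman φ xs (v t) - γ t * ⟪w' t, xs - v t⟫)
      + (-(β t) / 2 * ‖lam t - ls‖ ^ 2 + β t * ⟪lam' t, lam t - ls⟫), ?_⟩
  intro t ht
  constructor
  · -- differentiability with explicit derivative
    have hexp : HasDerivWithinAt (fun s => Real.exp (-s)) (-Real.exp (-t))
        (Set.Ici 0) t := by
      have hneg : HasDerivWithinAt (fun s : ℝ => -s) (-1) (Set.Ici 0) t :=
        (hasDerivWithinAt_id t _).neg
      have h := (Real.hasDerivAt_exp (-t)).comp_hasDerivWithinAt t hneg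
      simp [mul_comm] at h ⊢; exact h
    have hbd : HasDerivWithinAt β (-(β t)) (Set.Ici 0) t := by
      have hh : HasDerivWithinAt (fun s => β0 * Real.exp (-s)) (β0 * (-Real.exp (-t)))
          (Set.Ici 0) t := hexp.const_mul β0
      refine (hh.congr (fun y _ => hβ y) (hβ t)).congr_deriv ?_
      rw [hβ t]; ring
    have hgd : HasDerivWithinAt γ (μ - γ t) (Set.Ici 0) t := by
      have hh : HasDerivWithinAt (fun s => μ + (γ0 - μ) * Real.exp (-s))
          ((γ0 - μ) * (-Real.exp (-t))) (Set.Ici 0) t :=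
        (hexp.const_mul (γ0 - μ)).const_add μ
      refine (hh.congr (fun y _ => hγ y) (hγ t)).congr_deriv ?_
      rw [hγ t]; ring
    have hfx : HasDerivWithinAt (fun s => f (x s)) ⟪gradient f (x t), v t - x t⟫
        (Set.Ici 0) t := by
      have h := (hf (x t)).hasGradientAt.hasFDerivAt.comp_hasDerivWithinAt t (hx t ht)
      simp at h ⊢; exact h
    have hAx : HasDerivWithinAt (fun s => A (x s) - b) (A (v t - x t)) (Set.Ici 0) t :=
      (A.hasFDerivAt.comp_hasDerivWithinAt t (hx t ht)).sub_const b
    have hlsAx : HasDerivWithinAt (fun s => ⟪ls, A (x s) - b⟫) ⟪ls, A (v t - x t)⟫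
        (Set.Ici 0) t := by
      simpa using (hasDerivWithinAt_const t _ ls).inner ℝ hAx
    have hlamAxs : HasDerivWithinAt (fun s => ⟪lam s, A xs - b⟫) ⟪lam' t, A xs - b⟫
        (Set.Ici 0) t := by
      simpa using (hl t ht).inner ℝ (hasDerivWithinAt_const t _ (A xs - b))
    have hphiv : HasDerivWithinAt (fun s => φ (v s)) ⟪gradient φ (v t), v' t⟫
        (Set.Ici 0) t := by
      have h := (hφ (v t)).hasGradientAt.hasFDerivAt.comp_hasDerivWithinAt t (hv t ht)
      simp at h ⊢; exact h
    have hD : HasDerivWithinAt (fun s => bregman φ xs (v s)) (-⟪w' t, xs - v t⟫)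
        (Set.Ici 0) t := by
      have hin : HasDerivWithinAt (fun s => ⟪gradient φ (v s), xs - v s⟫)
          (⟪gradient φ (v t), 0 - v' t⟫ + ⟪w' t, xs - v t⟫) (Set.Ici 0) t :=
        (hw t ht).inner ℝ ((hasDerivWithinAt_const t _ xs).sub (hv t ht))
      have hh := ((hasDerivWithinAt_const t _ (φ xs)).sub hphiv).sub hin
      refine (hh.congr (fun y _ => rfl) rfl).congr_deriv ?_
      simp [inner_sub_right]
    have hgD : HasDerivWithinAt (fun s => γ s * bregman φ xs (v s))
        ((μ - γ t) * bregman φ xs (v t) - γ t * ⟪w' t, xs - v t⟫) (Set.Ici 0) t := by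
      refine (hgd.mul hD).congr_deriv ?_
      ring
    have hnsq : HasDerivWithinAt (fun s => ‖lam s - ls‖ ^ 2)
        (2 * ⟪lam' t, lam t - ls⟫) (Set.Ici 0) t := by
      have hsub : HasDerivWithinAt (fun s => lam s - ls) (lam' t) (Set.Ici 0) t :=
        (hl t ht).sub_const ls
      have hin := hsub.inner ℝ hsub
      have hh : HasDerivWithinAt (fun s => ‖lam s - ls‖ ^ 2)
          (⟪lam t - ls, lam' t⟫ + ⟪lam' t, lam t - ls⟫) (Set.Ici 0) t :=
        hin.congr (fun y _ => (real_inner_self_eq_norm_sq (lam y - ls)).symm)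
          (real_inner_self_eq_norm_sq (lam t - ls)).symm
      refine hh.congr_deriv ?_
      rw [real_inner_comm]; ring
    have hbN : HasDerivWithinAt (fun s => β s / 2 * ‖lam s - ls‖ ^ 2)
        (-(β t) / 2 * ‖lam t - ls‖ ^ 2 + β t * ⟪lam' t, lam t - ls⟫) (Set.Ici 0) t := by
      have hb2 : HasDerivWithinAt (fun s => β s / 2) (-(β t) / 2) (Set.Ici 0) t := by
        simpa [div_eq_mul_inv] using hbd.mul_const (1/2 : ℝ)
      refine (hb2.mul hnsq).congr_deriv ?_
      ring
    have total := ((((hfx.add hlsAx).sub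
        ((hasDerivWithinAt_const t _ (f xs)).add hlamAxs)).add hgD).add hbN)
    refine (total.congr (fun y _ => hE y) (hE t)).congr_deriv ?_
    ring
  · -- the Lyapunov inequality
    have hkey := hconv xs (x t)
    have h1 : γ t * ⟪w' t, xs - v t⟫
        = μ * ⟪gradient φ (x t) - gradient φ (v t), xs - v t⟫
          - ⟪gradient f (x t), xs - v t⟫ - ⟪lam t, A xs - A (v t)⟫ := by
      rw [← real_inner_smul_left, hweq t ht, inner_sub_left, inner_sub_left,
        real_inner_smul_left, ContinuousLinearMap.adjoint_inner_left, map_sub,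
        inner_sub_right]
    have h2 : β t * ⟪lam' t, lam t - ls⟫ = ⟪A (v t) - b, lam t - ls⟫ := by
      rw [← real_inner_smul_left, hleq t ht]
    have h3 : ⟪lam t, A xs - b⟫ = 0 := by rw [hfeas, sub_self, inner_zero_right]
    have h4 : ⟪lam' t, A xs - b⟫ = 0 := by rw [hfeas, sub_self, inner_zero_right]
    have h5 : ⟪lam t, A xs - A (v t)⟫ = ⟪lam t, b - A (v t)⟫ := by rw [hfeas]
    simp only [hE, h1, h2, h3, h4, h5]
    simp only [bregman, map_sub, inner_sub_left, inner_sub_right] at hkey ⊢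
    linarith [hkey, real_inner_comm (A (v t)) (lam t), real_inner_comm b (lam t),
      real_inner_comm (A (v t)) ls, real_inner_comm b ls]
end

section
/- Let Q ⊆ ℝ^n be a nonempty convex set, φ : ℝ^n → ℝ differentiable and 1-strongly convex on Q, i.e. D_φ(x,y) ≥ (1/2)‖x − y‖² for all x, y ∈ Q; let μ > 0 and h : ℝ^n → ℝ differentiable and μ-convex on Q relative to φ, i.e. h(x) ≥ h(y) + ⟨∇h(y), x − y⟩ + μ D_φ(x,y) for all x, y ∈ Q; let g : ℝ^n → ℝ be convex on Q, A a real m×n matrix, b ∈ ℝ^m. Suppose x* ∈ Q with Ax* = b, λ* ∈ ℝ^m, and there exist ζ, w ∈ ℝ^n with: g(x) ≥ g(x*) + ⟨ζ, x − x*⟩ for all x ∈ Q; ⟨w, x − x*⟩ ≤ 0 for all x ∈ Q; and ∇h(x*) + ζ + w + Aᵀλ* = 0. Let x_k, v_k ∈ Q, λ_k ∈ ℝ^m, γ_k ≥ γ_min > 0, β_k > 0 and B ≥ 0 be such that L(x_k,λ*) − L(x*,λ_k) + γ_k·D_φ(x*, v_k) + (β_k/2)‖λ_k − λ*‖² ≤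 B. Then γ_min·‖v_k − x*‖² + μ·‖x_k − x*‖² ≤ 2B. -/
open RealInnerProductSpace

/-- Strong-convexity distance estimate: a bound `B` on the discrete Lyapunov
function yields `γ_min ‖v_k - x*‖² + μ ‖x_k - x*‖² ≤ 2B`. -/
theorem lyapunov_distance_estimate {n m : ℕ}
    (Q : Set (EuclideanSpace ℝ (Fin n))) (hQne : Q.Nonempty) (hQconv : Convex ℝ Q)
    (φ : EuclideanSpace ℝ (Fin n) → ℝ) (hφ : Differentiable ℝ φ)
    (hφsc : ∀ x ∈ Q, ∀ y ∈ Q, bregman φ x y ≥ 1 / 2 * ‖x - y‖ ^ 2)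
    (μ : ℝ) (hμ : 0 < μ)
    (h : EuclideanSpace ℝ (Fin n) → ℝ) (hh : Differentiable ℝ h)
    (hconv : ∀ x ∈ Q, ∀ y ∈ Q,
      h x ≥ h y + ⟪gradient h y, x - y⟫ + μ * bregman φ x y)
    (g : EuclideanSpace ℝ (Fin n) → ℝ) (hg : ConvexOn ℝ Q g)
    (A : EuclideanSpace ℝ (Fin n) →L[ℝ] EuclideanSpace ℝ (Fin m))
    (b : EuclideanSpace ℝ (Fin m))
    (xs : EuclideanSpace ℝ (Fin n)) (hxsQ : xs ∈ Q) (hfeas : A xs = b)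
    (ls : EuclideanSpace ℝ (Fin m))
    (ζ w : EuclideanSpace ℝ (Fin n))
    (hζ : ∀ x ∈ Q, g x ≥ g xs + ⟪ζ, x - xs⟫)
    (hw : ∀ x ∈ Q, ⟪w, x - xs⟫ ≤ 0)
    (hopt : gradient h xs + ζ + w + (ContinuousLinearMap.adjoint A) ls = 0)
    (xk vk : EuclideanSpace ℝ (Fin n)) (hxkQ : xk ∈ Q) (hvkQ : vk ∈ Q)
    (lk : EuclideanSpace ℝ (Fin m))
    (γk γmin βk B : ℝ) (hγmin : 0 < γmin) (hγk : γmin ≤ γk) (hβk : 0 < βk)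
    (hB : 0 ≤ B)
    (hbound : (h xk + g xk + ⟪ls, A xk - b⟫) - (h xs + g xs + ⟪lk, A xs - b⟫)
      + γk * bregman φ xs vk + βk / 2 * ‖lk - ls‖ ^ 2 ≤ B) :
    γmin * ‖vk - xs‖ ^ 2 + μ * ‖xk - xs‖ ^ 2 ≤ 2 * B := by
  have hDxk : bregman φ xk xs ≥ 1 / 2 * ‖xk - xs‖ ^ 2 := hφsc _ hxkQ _ hxsQ
  have hDvs : bregman φ xs vk ≥ 1 / 2 * ‖xs - vk‖ ^ 2 := hφsc _ hxsQ _ hvkQ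
  have hzero : ⟪lk, A xs - b⟫ = 0 := by rw [hfeas, sub_self, inner_zero_right]
  have hAkl : ⟪ls, A xk - b⟫ = ⟪(ContinuousLinearMap.adjoint A) ls, xk - xs⟫ := by
    rw [← hfeas, ← map_sub, ContinuousLinearMap.adjoint_inner_left]
  have hsum : gradient h xs + ζ + (ContinuousLinearMap.adjoint A) ls = -w := by
    have := hopt
    rw [← sub_eq_zero]
    abel_nf
    abel_nf at this
    linear_combination (norm := module) this
  have hkey : ⟪gradient h xs, xk - xs⟫ + ⟪ζ, xk - xs⟫
      + ⟪(ContinuousLinearMap.adjoint A) ls, xk - xs⟫ = -⟪w, xk - xs⟫ := by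
    rw [← inner_add_left, ← inner_add_left, hsum, inner_neg_left]
  have hhc := hconv xk hxkQ xs hxsQ
  have hgc := hζ xk hxkQ
  have hwc := hw xk hxkQ
  have hnorm : ‖xs - vk‖ = ‖vk - xs‖ := norm_sub_rev _ _
  have hβnn : 0 ≤ βk / 2 * ‖lk - ls‖ ^ 2 := by positivity
  have hDvnn : γmin * bregman φ xs vk ≤ γk * bregman φ xs vk := by
    have : 0 ≤ bregman φ xs vk := le_trans (by positivity) hDvs
    nlinarith
  rw [hnorm] at hDvs
  nlinarith [sq_nonneg ‖xk - xs‖, sq_nonneg ‖vk - xs‖]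
end
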